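/- arXiv:2308.11061 — 13 statements merged into one kernel-verified Lean document; each statement's English description precedes it below -/
import Mathlib

section
/- Assume that W ∈ Mat_X(ℂ) is a spin model. Then W^(-) is a spin model. -/
open Matrix Finset

/-- The matrix `W^(-)` with `(a,b)`-entry `1 / W_{b,a}`. -/
noncomputable def matMinus {X : Type*} (W : Matrix X X ℂ) : Matrix X X ℂ :=
  Matrix.of fun a b => (W b a)⁻¹

/-- A matrix is of type II whenever all its entries are nonzero and
`W * W^(-)` is a scalar multiple of the identity. -/
def IsTypeII {X : Type*} [Fintype X] [DecidableEq X] (W : Matrix X X ℂ) : Prop :=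
  (∀ a b, W a b ≠ 0) ∧ ∃ c : ℂ, W * matMinus W = c • (1 : Matrix X X ℂ)

/-- A spin model is a symmetric type II matrix satisfying the star-triangle
(type III) condition. -/
def IsSpinModel {X : Type*} [Fintype X] [DecidableEq X] (W : Matrix X X ℂ) : Prop :=
  W.IsSymm ∧ IsTypeII W ∧
    ∀ a b c : X, ∑ e : X, W e b * W e c / W e a =
      (Real.sqrt (Fintype.card X) : ℂ) * W b c / (W a b * W c a)

theorem spinModel_matMinus {X : Type*} [Fintype X] [DecidableEq X] [Nonempty X]
    (W : Matrix X X ℂ) (hW : IsSpinModel W) :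
    IsSpinModel (matMinus W) := by
  obtain ⟨hsym, ⟨hnz, c, hc⟩, hst⟩ := hW
  have hs : ∀ a b, W a b = W b a := fun a b => hsym.apply b a
  set n : ℂ := (Fintype.card X : ℂ) with hn
  have hn0 : n ≠ 0 := Nat.cast_ne_zero.mpr Fintype.card_ne_zero
  set s : ℂ := ((Real.sqrt (Fintype.card X) : ℝ) : ℂ) with hsdef
  have hss : s * s = n := by
    rw [hsdef, hn, ← Complex.ofReal_mul,
      Real.mul_self_sqrt (Nat.cast_nonneg _)]
    norm_num
  have hs0 : s ≠ 0 := by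
    intro h
    rw [h, mul_zero] at hss
    exact hn0 hss.symm
  -- matMinus matMinus W = W
  have hmm : matMinus (matMinus W) = W := by
    ext a b
    simp [matMinus]
  -- c = n
  obtain ⟨a0⟩ := ‹Nonempty X›
  have hcval : c = n := by
    have h := congrFun (congrFun hc a0) a0
    rw [Matrix.mul_apply] at h
    simp only [matMinus, Matrix.of_apply, Matrix.smul_apply, Matrix.one_apply_eq,
      smul_eq_mul, mul_one] at h
    rw [← h]
    have : ∀ e : X, W a0 e * (W a0 e)⁻¹ = 1 := fun e => mul_inv_cancel₀ (hnz a0 e)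
    simp [this, hn]
  have hWWm : W * matMinus W = n • 1 := by rw [hc, hcval]
  have hWmW : matMinus W * W = n • 1 := by
    have h1 : W * (n⁻¹ • matMinus W) = 1 := by
      rw [Matrix.mul_smul, hWWm, smul_smul, inv_mul_cancel₀ hn0, one_smul]
    have h2 := mul_eq_one_comm.mp h1
    calc matMinus W * W = n • ((n⁻¹ • matMinus W) * W) := by
          rw [Matrix.smul_mul, smul_smul, mul_inv_cancel₀ hn0, one_smul]
      _ = n • 1 := by rw [h2]
  -- key dual star-triangle identity
  have key : ∀ a b d : X, ∑ e : X, W e a / (W e b * W e d) = s * W a b * W d a / W b d := by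
    intro a b d
    set v : X → ℂ := fun e => W e a / W e b with hv
    have hWv : W *ᵥ v = (s / W a b) • v := by
      funext x
      have h := hst b x a
      rw [Matrix.mulVec, dotProduct]
      simp only [hv, Pi.smul_apply, smul_eq_mul]
      calc ∑ e : X, W x e * (W e a / W e b)
          = ∑ e : X, W e x * W e a / W e b := by
            refine Finset.sum_congr rfl fun e _ => ?_
            rw [hs x e, mul_div_assoc]
        _ = s * W x a / (W b x * W a b) := h
        _ = s / W a b * (W x a / W x b) := by
            rw [hs b x]
            field_simp
    have hmv : matMinus W *ᵥ v = (s * W a b) • v := by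
      have h1 : matMinus W *ᵥ (W *ᵥ v) = n • v := by
        rw [Matrix.mulVec_mulVec, hWmW, Matrix.smul_mulVec, Matrix.one_mulVec]
      rw [hWv, Matrix.mulVec_smul] at h1
      have h2 : (s / W a b)⁻¹ • ((s / W a b) • matMinus W *ᵥ v)
          = (s / W a b)⁻¹ • (n • v) := by rw [h1]
      have hq : s / W a b ≠ 0 := div_ne_zero hs0 (hnz a b)
      rw [smul_smul, inv_mul_cancel₀ hq, one_smul, smul_smul] at h2
      rw [h2]
      congr 1
      field_simp
      rw [← hss]
      ring
    have h3 := congrFun hmv d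
    rw [Matrix.mulVec, dotProduct] at h3
    simp only [hv, Pi.smul_apply, smul_eq_mul, matMinus, Matrix.of_apply] at h3
    calc ∑ e : X, W e a / (W e b * W e d)
        = ∑ e : X, (W e d)⁻¹ * (W e a / W e b) := by
          refine Finset.sum_congr rfl fun e _ => ?_
          field_simp
      _ = s * W a b * (W d a / W d b) := h3
      _ = s * W a b * W d a / W b d := by rw [hs b d]; ring
  refine ⟨?_, ⟨?_, ⟨n, ?_⟩⟩, ?_⟩
  · -- symmetry
    ext a b
    simp [matMinus, Matrix.transpose_apply, hs a b]
  · intro a b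
    exact inv_ne_zero (hnz b a)
  · rw [hmm]; exact hWmW
  · intro a b d
    have hk := key a b d
    have hWbd := hnz b d
    have hWab := hnz a b
    have hWda := hnz d a
    calc ∑ e : X, matMinus W e b * matMinus W e d / matMinus W e a
        = ∑ e : X, W e a / (W e b * W e d) := by
          refine Finset.sum_congr rfl fun e _ => ?_
          simp only [matMinus, Matrix.of_apply]
          rw [hs b e, hs d e, hs a e]
          field_simp
      _ = s * W a b * W d a / W b d := hk
      _ = s * matMinus W b d / (matMinus W a b * matMinus W d a) := by
          simp only [matMinus, Matrix.of_apply]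
          rw [hs d b, hs b a, hs a d, hs d a]
          field_simp
end

section
/- The following two relations hold: A²B − β·ABA + BA² + (q² − q^{−2})²·B = (q² − q^{−2})²·Z − (q − q^{−1})(q² − q^{−2})·Z·A, and B²A − β·BAB + AB² + (q² − q^{−2})²·A = (q² − q^{−2})²·Z − (q − q^{−1})(q² − q^{−2})·Z·B. -/
open Matrix Finset

private lemma key_relation {X : Type*} [Fintype X] [DecidableEq X]
    (D : ℤ) (q a : ℂ) (hq : q ≠ 0) (ha : a ≠ 0) (hq2 : q ^ 2 ≠ -1)
    (ϑ : ℤ → ℂ)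
    (hϑ : ∀ i : ℤ, ϑ i = a * q ^ (2 * i - D) + a⁻¹ * q ^ (D - 2 * i))
    (β : ℂ) (hβ : β = q ^ (2 : ℤ) + q ^ (-2 : ℤ))
    (E : ℤ → Matrix X X ℂ)
    (hEsum : ∑ i ∈ Finset.Icc (0 : ℤ) D, E i = 1)
    (hEmul : ∀ i ∈ Finset.Icc (0 : ℤ) D, ∀ j ∈ Finset.Icc (0 : ℤ) D,
      E i * E j = if i = j then E i else 0)
    (A B : Matrix X X ℂ)
    (hA : A = ∑ i ∈ Finset.Icc (0 : ℤ) D, ϑ i • E i)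
    (htriE : ∀ i ∈ Finset.Icc (0 : ℤ) D, ∀ j ∈ Finset.Icc (0 : ℤ) D,
      1 < |i - j| → E i * B * E j = 0)
    (Z : Matrix X X ℂ)
    (hZE : ∀ i ∈ Finset.Icc (0 : ℤ) D,
      Z * E i = (1 + ϑ i / (q + q⁻¹)) • (E i * B * E i) ∧
      E i * Z = (1 + ϑ i / (q + q⁻¹)) • (E i * B * E i)) :
    A * A * B - β • (A * B * A) + B * (A * A)
        + ((q ^ (2 : ℤ) - q ^ (-2 : ℤ)) ^ 2) • B
      = ((q ^ (2 : ℤ) - q ^ (-2 : ℤ)) ^ 2) • Z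
        - ((q - q⁻¹) * (q ^ (2 : ℤ) - q ^ (-2 : ℤ))) • (Z * A) := by
  have h2 : 1 + q ^ 2 ≠ 0 := fun h => hq2 (by linear_combination h)
  have hqq : q + q⁻¹ ≠ 0 := by
    have hx : q + q⁻¹ = (1 + q ^ 2) / q := by field_simp; ring
    rw [hx]; exact div_ne_zero h2 hq
  have z1 : q ^ (2 : ℤ) = q ^ 2 := zpow_ofNat q 2
  have z2 : q ^ (-2 : ℤ) = q⁻¹ ^ 2 := by rw [_root_.zpow_neg, z1, inv_pow]
  rw [z1, z2] at hβ ⊢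
  -- eigenprojection identities
  have hEA : ∀ i ∈ Finset.Icc (0 : ℤ) D, E i * A = ϑ i • E i := by
    intro i hi
    rw [hA, Finset.mul_sum, Finset.sum_eq_single_of_mem i hi]
    · rw [mul_smul_comm, hEmul i hi i hi, if_pos rfl]
    · intro j hj hji
      rw [mul_smul_comm, hEmul i hi j hj, if_neg (fun h => hji h.symm), smul_zero]
  have hAE : ∀ i ∈ Finset.Icc (0 : ℤ) D, A * E i = ϑ i • E i := by
    intro i hi
    rw [hA, Finset.sum_mul, Finset.sum_eq_single_of_mem i hi]
    · rw [smul_mul_assoc, hEmul i hi i hi, if_pos rfl]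
    · intro j hj hji
      rw [smul_mul_assoc, hEmul j hj i hi, if_neg hji, smul_zero]
  have hsand : ∀ M : Matrix X X ℂ,
      M = ∑ i ∈ Finset.Icc (0 : ℤ) D, ∑ j ∈ Finset.Icc (0 : ℤ) D, E i * M * E j := by
    intro M
    calc M = (∑ i ∈ Finset.Icc (0 : ℤ) D, E i) * M * (∑ j ∈ Finset.Icc (0 : ℤ) D, E j) := by
          rw [hEsum, one_mul, mul_one]
      _ = ∑ i ∈ Finset.Icc (0 : ℤ) D, ∑ j ∈ Finset.Icc (0 : ℤ) D, E i * M * E j := by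
          simp only [Finset.sum_mul, Finset.mul_sum]
          rw [Finset.sum_comm]
  -- adjacency scalar identity
  have hθ0 : ∀ i : ℤ, ϑ i * ϑ i - β * (ϑ i * ϑ (i + 1)) + ϑ (i + 1) * ϑ (i + 1)
      + (q ^ 2 - q⁻¹ ^ 2) ^ 2 = 0 := by
    intro i
    have e1 : q ^ (2 * (i + 1) - D) = q ^ (2 * i - D) * q ^ 2 := by
      rw [show 2 * (i + 1) - D = (2 * i - D) + (2 : ℤ) by ring, zpow_add₀ hq, zpow_ofNat]
    have e2 : q ^ (D - 2 * (i + 1)) = (q ^ (2 * i - D))⁻¹ * q⁻¹ ^ 2 := by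
      rw [show D - 2 * (i + 1) = (-(2 * i - D)) + (-2 : ℤ) by ring, zpow_add₀ hq,
        _root_.zpow_neg, _root_.zpow_neg, zpow_ofNat, inv_pow]
    have e3 : q ^ (D - 2 * i) = (q ^ (2 * i - D))⁻¹ := by
      rw [show D - 2 * i = -(2 * i - D) by ring, _root_.zpow_neg]
    have hu : q ^ (2 * i - D) ≠ 0 := zpow_ne_zero _ hq
    rw [hϑ i, hϑ (i + 1), hβ, e1, e2, e3]
    linear_combination
      ((-2 : ℂ) - a⁻¹ ^ 2 * ((q ^ (2 * i - D))⁻¹) ^ 2 - a ^ 2 * (q ^ (2 * i - D)) ^ 2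
        - 2 * q * q⁻¹ - q * q⁻¹ * a⁻¹ ^ 2 * ((q ^ (2 * i - D))⁻¹) ^ 2
        - q * q⁻¹ * a ^ 2 * (q ^ (2 * i - D)) ^ 2) * (mul_inv_cancel₀ hq)
      + (2 * (q ^ (2 * i - D)) * (q ^ (2 * i - D))⁻¹
        - q⁻¹ ^ 4 * (q ^ (2 * i - D)) * (q ^ (2 * i - D))⁻¹
        - q ^ 4 * (q ^ (2 * i - D)) * (q ^ (2 * i - D))⁻¹) * (mul_inv_cancel₀ ha)
      + ((2 : ℂ) - q⁻¹ ^ 4 - q ^ 4) * (mul_inv_cancel₀ hu)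
  -- main sandwich computation
  have main : ∀ i ∈ Finset.Icc (0 : ℤ) D, ∀ j ∈ Finset.Icc (0 : ℤ) D,
      E i * (A * A * B - β • (A * B * A) + B * (A * A)
        + ((q ^ 2 - q⁻¹ ^ 2) ^ 2) • B) * E j
      = E i * (((q ^ 2 - q⁻¹ ^ 2) ^ 2) • Z
        - ((q - q⁻¹) * (q ^ 2 - q⁻¹ ^ 2)) • (Z * A)) * E j := by
    intro i hi j hj
    have t1 : E i * (A * A * B) * E j = (ϑ i * ϑ i) • (E i * B * E j) := by
      calc E i * (A * A * B) * E j = (E i * A) * (A * (B * E j)) := by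
            simp only [mul_assoc]
        _ = (ϑ i • E i) * (A * (B * E j)) := by rw [hEA i hi]
        _ = ϑ i • ((E i * A) * (B * E j)) := by rw [smul_mul_assoc, ← mul_assoc]
        _ = ϑ i • ((ϑ i • E i) * (B * E j)) := by rw [hEA i hi]
        _ = (ϑ i * ϑ i) • (E i * B * E j) := by rw [smul_mul_assoc, smul_smul, ← mul_assoc]
    have t2 : E i * (A * B * A) * E j = (ϑ i * ϑ j) • (E i * B * E j) := by
      calc E i * (A * B * A) * E j = (E i * A) * (B * (A * E j)) := by
            simp only [mul_assoc]
        _ = (ϑ i • E i) * (B * (ϑ j • E j)) := by rw [hEA i hi, hAE j hj]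
        _ = (ϑ i * ϑ j) • (E i * B * E j) := by
            rw [smul_mul_assoc, mul_smul_comm, mul_smul_comm, smul_smul, ← mul_assoc]
    have t3 : E i * (B * (A * A)) * E j = (ϑ j * ϑ j) • (E i * B * E j) := by
      calc E i * (B * (A * A)) * E j = E i * (B * (A * (A * E j))) := by
            simp only [mul_assoc]
        _ = E i * (B * (A * (ϑ j • E j))) := by rw [hAE j hj]
        _ = (ϑ j * ϑ j) • (E i * B * E j) := by
            rw [mul_smul_comm, hAE j hj, smul_smul, mul_smul_comm, mul_smul_comm, ← mul_assoc]
    have tZ : E i * Z * E j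
        = if i = j then (1 + ϑ i / (q + q⁻¹)) • (E i * B * E i) else 0 := by
      rw [(hZE i hi).2, smul_mul_assoc, mul_assoc, hEmul i hi j hj]
      split_ifs with h
      · rfl
      · rw [mul_zero, smul_zero]
    have tZA : E i * (Z * A) * E j
        = if i = j then ((1 + ϑ i / (q + q⁻¹)) * ϑ i) • (E i * B * E i) else 0 := by
      calc E i * (Z * A) * E j = (E i * Z) * (A * E j) := by simp only [mul_assoc]
        _ = ((1 + ϑ i / (q + q⁻¹)) • (E i * B * E i)) * (ϑ j • E j) := by
            rw [(hZE i hi).2, hAE j hj]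
        _ = ((1 + ϑ i / (q + q⁻¹)) * ϑ j) • ((E i * B * E i) * E j) := by
            rw [smul_mul_assoc, mul_smul_comm, smul_smul]
        _ = if i = j then ((1 + ϑ i / (q + q⁻¹)) * ϑ i) • (E i * B * E i) else 0 := by
            rw [mul_assoc, hEmul i hi j hj]
            split_ifs with h
            · subst h; rfl
            · rw [mul_zero, smul_zero]
    simp only [mul_sub, mul_add, sub_mul, add_mul, smul_mul_assoc, mul_smul_comm]
    rw [t1, t2, t3, tZ, tZA]
    rcases eq_or_ne i j with rfl | hne
    · rw [if_pos rfl, if_pos rfl]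
      have hfd : (1 + ϑ i / (q + q⁻¹)) * (q + q⁻¹) = (q + q⁻¹) + ϑ i := by
        rw [add_mul, one_mul, div_mul_cancel₀ _ hqq]
      have hs : ϑ i * ϑ i - β * (ϑ i * ϑ i) + ϑ i * ϑ i + (q ^ 2 - q⁻¹ ^ 2) ^ 2
          = (q ^ 2 - q⁻¹ ^ 2) ^ 2 * (1 + ϑ i / (q + q⁻¹))
            - (q - q⁻¹) * (q ^ 2 - q⁻¹ ^ 2) * ((1 + ϑ i / (q + q⁻¹)) * ϑ i) := by
        rw [hβ]
        linear_combination
          ((q ^ 2 - q⁻¹ ^ 2) ^ 2 - (q - q⁻¹) * (q ^ 2 - q⁻¹ ^ 2) * ϑ i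
            - (ϑ i * ϑ i - (q ^ 2 + q⁻¹ ^ 2) * (ϑ i * ϑ i) + ϑ i * ϑ i
              + (q ^ 2 - q⁻¹ ^ 2) ^ 2)) * (mul_inv_cancel₀ hqq)
          + (-2 * (ϑ i) ^ 2 * (q + q⁻¹) * (q + q⁻¹)⁻¹) * (mul_inv_cancel₀ hq)
      match_scalars <;> linear_combination hs
    · rw [if_neg hne, if_neg hne, smul_zero, smul_zero, sub_zero]
      by_cases habs : 1 < |i - j|
      · rw [htriE i hi j hj habs]
        simp
      · have h1 := abs_le.mp (not_lt.mp habs)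
        have hz : ϑ i * ϑ i - β * (ϑ i * ϑ j) + ϑ j * ϑ j + (q ^ 2 - q⁻¹ ^ 2) ^ 2 = 0 := by
          rcases (by omega : j = i + 1 ∨ i = j + 1) with rfl | rfl
          · exact hθ0 i
          · linear_combination hθ0 j
        match_scalars <;> linear_combination hz
  calc A * A * B - β • (A * B * A) + B * (A * A) + ((q ^ 2 - q⁻¹ ^ 2) ^ 2) • B
      = ∑ i ∈ Finset.Icc (0 : ℤ) D, ∑ j ∈ Finset.Icc (0 : ℤ) D,
          E i * (A * A * B - β • (A * B * A) + B * (A * A)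
            + ((q ^ 2 - q⁻¹ ^ 2) ^ 2) • B) * E j := hsand _
    _ = ∑ i ∈ Finset.Icc (0 : ℤ) D, ∑ j ∈ Finset.Icc (0 : ℤ) D,
          E i * (((q ^ 2 - q⁻¹ ^ 2) ^ 2) • Z
            - ((q - q⁻¹) * (q ^ 2 - q⁻¹ ^ 2)) • (Z * A)) * E j :=
        Finset.sum_congr rfl fun i hi => Finset.sum_congr rfl fun j hj => main i hi j hj
    _ = ((q ^ 2 - q⁻¹ ^ 2) ^ 2) • Z - ((q - q⁻¹) * (q ^ 2 - q⁻¹ ^ 2)) • (Z * A) :=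
        (hsand _).symm

theorem tridiagonal_relations_with_Z
    {X : Type*} [Fintype X] [DecidableEq X] [Nonempty X]
    (D : ℤ) (hD : 3 ≤ D) (q a : ℂ) (hq : q ≠ 0) (ha : a ≠ 0)
    (hq1 : q ^ 2 ≠ 1) (hq2 : q ^ 2 ≠ -1)
    (ϑ : ℤ → ℂ)
    (hϑ : ∀ i : ℤ, ϑ i = a * q ^ (2 * i - D) + a⁻¹ * q ^ (D - 2 * i))
    (β : ℂ) (hβ : β = q ^ (2 : ℤ) + q ^ (-2 : ℤ))
    (E Estar : ℤ → Matrix X X ℂ)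
    (hEsum : ∑ i ∈ Finset.Icc (0 : ℤ) D, E i = 1)
    (hEmul : ∀ i ∈ Finset.Icc (0 : ℤ) D, ∀ j ∈ Finset.Icc (0 : ℤ) D,
      E i * E j = if i = j then E i else 0)
    (hEssum : ∑ i ∈ Finset.Icc (0 : ℤ) D, Estar i = 1)
    (hEsmul : ∀ i ∈ Finset.Icc (0 : ℤ) D, ∀ j ∈ Finset.Icc (0 : ℤ) D,
      Estar i * Estar j = if i = j then Estar i else 0)
    (A B : Matrix X X ℂ)
    (hA : A = ∑ i ∈ Finset.Icc (0 : ℤ) D, ϑ i • E i)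
    (hB : B = ∑ i ∈ Finset.Icc (0 : ℤ) D, ϑ i • Estar i)
    (htriE : ∀ i ∈ Finset.Icc (0 : ℤ) D, ∀ j ∈ Finset.Icc (0 : ℤ) D,
      1 < |i - j| → E i * B * E j = 0)
    (htriEs : ∀ i ∈ Finset.Icc (0 : ℤ) D, ∀ j ∈ Finset.Icc (0 : ℤ) D,
      1 < |i - j| → Estar i * A * Estar j = 0)
    (Z : Matrix X X ℂ)
    (hZE : ∀ i ∈ Finset.Icc (0 : ℤ) D,
      Z * E i = (1 + ϑ i / (q + q⁻¹)) • (E i * B * E i) ∧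
      E i * Z = (1 + ϑ i / (q + q⁻¹)) • (E i * B * E i))
    (hZEs : ∀ i ∈ Finset.Icc (0 : ℤ) D,
      Z * Estar i = (1 + ϑ i / (q + q⁻¹)) • (Estar i * A * Estar i) ∧
      Estar i * Z = (1 + ϑ i / (q + q⁻¹)) • (Estar i * A * Estar i))
    :
    (A * A * B - β • (A * B * A) + B * (A * A)
        + ((q ^ (2 : ℤ) - q ^ (-2 : ℤ)) ^ 2) • B
      = ((q ^ (2 : ℤ) - q ^ (-2 : ℤ)) ^ 2) • Z
        - ((q - q⁻¹) * (q ^ (2 : ℤ) - q ^ (-2 : ℤ))) • (Z * A)) ∧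
    (B * B * A - β • (B * A * B) + A * (B * B)
        + ((q ^ (2 : ℤ) - q ^ (-2 : ℤ)) ^ 2) • A
      = ((q ^ (2 : ℤ) - q ^ (-2 : ℤ)) ^ 2) • Z
        - ((q - q⁻¹) * (q ^ (2 : ℤ) - q ^ (-2 : ℤ))) • (Z * B)) :=
  ⟨key_relation D q a hq ha hq2 ϑ hϑ β hβ E hEsum hEmul A B hA htriE Z hZE,
   key_relation D q a hq ha hq2 ϑ hϑ β hβ Estar hEssum hEsmul B A hB htriEs Z hZEs⟩
end

section
/- Define C = Z − (q·A·B − q^{−1}·B·A)/(q² − q^{−2}). Then the ℤ₃-symmetric universal Askey–Wilson relations hold: A + (q·B·C − q^{−1}·C·B)/(q² − q^{−2}) = Z and B + (q·C·A − q^{−1}·A·C)/(q² − q^{−2}) = Z. -/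
open Matrix Finset

lemma scalar_diag (q t : ℂ) (hq : q ≠ 0) (hqq : q + q⁻¹ ≠ 0) :
    (q^2 - (q^2)⁻¹)^2 + (q^2 - (q^2)⁻¹)*q*t*(1 + t/(q+q⁻¹))
      - (q^2 - (q^2)⁻¹)*q⁻¹*t*(1 + t/(q+q⁻¹)) - (q^2+(q^2)⁻¹)*(t*t) + t*t + t*t
      = (q^2-(q^2)⁻¹)^2*(1+t/(q+q⁻¹)) := by
  have hu : q*q⁻¹ = 1 := mul_inv_cancel₀ hq
  have hv : (q+q⁻¹)*(q+q⁻¹)⁻¹ = 1 := mul_inv_cancel₀ hqq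
  linear_combination
    (q^2*(q+q⁻¹)⁻¹*t + 2*q*q⁻¹*(q+q⁻¹)⁻¹*t - 2*q*(q+q⁻¹)⁻¹*t^2 + q⁻¹^2*(q+q⁻¹)⁻¹*t
      - 2*q⁻¹*(q+q⁻¹)⁻¹*t^2 - q*t - q⁻¹*t) * hu
    + (-(q^3*t) + q^2*t^2 - q⁻¹^3*t + q⁻¹^2*t^2 + q*t + q⁻¹*t - 2*t^2) * hv


lemma aux_id (a b u v p w : ℂ) (hab : a*b = 1) (huv : u*v = 1) (hpw : p*w = 1) :
    (a*u + b*v)^2 + (a*u*p + b*v*w)^2 + (p - w)^2 = (p + w) * ((a*u + b*v) * (a*u*p + b*v*w)) := by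
  linear_combination (4 - (p+w)^2) * huv * (a*b) + (4 - (p+w)^2) * hab +
    (2*a*b*u*v - 4 - a^2*u^2 - b^2*v^2) * hpw

lemma theta_rec (D : ℤ) (q a : ℂ) (hq : q ≠ 0) (ha : a ≠ 0)
    (ϑ : ℤ → ℂ) (hϑ : ∀ i : ℤ, ϑ i = a * q ^ (2 * i - D) + a⁻¹ * q ^ (D - 2 * i))
    (i j : ℤ) (hij : j = i + 1 ∨ j = i - 1) :
    ϑ i ^ 2 + ϑ j ^ 2 + (q ^ (2:ℤ) - q ^ (-2:ℤ)) ^ 2 = (q ^ (2:ℤ) + q ^ (-2:ℤ)) * (ϑ i * ϑ j) := by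
  have h2 : q ^ (2:ℤ) = q ^ 2 := by norm_cast
  have hm2 : q ^ (-2:ℤ) = (q ^ 2)⁻¹ := by rw [_root_.zpow_neg]; norm_cast
  have hu : q ^ (D - 2*i) = (q ^ (2*i - D))⁻¹ := by
    rw [show D - 2*i = -(2*i - D) by ring, _root_.zpow_neg]
  have hune : q ^ (2*i - D) ≠ 0 := zpow_ne_zero _ hq
  have hab : a * a⁻¹ = 1 := mul_inv_cancel₀ ha
  have huv : q ^ (2*i - D) * (q ^ (2*i - D))⁻¹ = 1 := mul_inv_cancel₀ hune
  have hpw : q ^ 2 * (q ^ 2)⁻¹ = 1 := mul_inv_cancel₀ (pow_ne_zero 2 hq)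
  have hwp : (q ^ 2)⁻¹ * q ^ 2 = 1 := inv_mul_cancel₀ (pow_ne_zero 2 hq)
  rcases hij with rfl | rfl
  · have e1 : q ^ (2*(i+1) - D) = q ^ (2*i - D) * q ^ 2 := by
      rw [show 2*(i+1) - D = (2*i - D) + 2 by ring, zpow_add₀ hq]; norm_cast
    have e2 : q ^ (D - 2*(i+1)) = (q ^ (2*i - D))⁻¹ * (q ^ 2)⁻¹ := by
      rw [show D - 2*(i+1) = -(2*i - D) + -2 by ring, zpow_add₀ hq, _root_.zpow_neg,
        _root_.zpow_neg]; norm_cast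
    rw [hϑ, hϑ, h2, hm2, e1, e2, hu]
    linear_combination aux_id a a⁻¹ (q ^ (2*i - D)) (q ^ (2*i - D))⁻¹ (q^2) (q^2)⁻¹ hab huv hpw
  · have e1 : q ^ (2*(i-1) - D) = q ^ (2*i - D) * (q ^ 2)⁻¹ := by
      rw [show 2*(i-1) - D = (2*i - D) + -2 by ring, zpow_add₀ hq, _root_.zpow_neg]; norm_cast
    have e2 : q ^ (D - 2*(i-1)) = (q ^ (2*i - D))⁻¹ * q ^ 2 := by
      rw [show D - 2*(i-1) = -(2*i - D) + 2 by ring, zpow_add₀ hq, _root_.zpow_neg]; norm_cast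
    rw [hϑ, hϑ, h2, hm2, e1, e2, hu]
    linear_combination aux_id a a⁻¹ (q ^ (2*i - D)) (q ^ (2*i - D))⁻¹ (q^2)⁻¹ (q^2) hab huv hwp

lemma sandwich {X : Type*} [Fintype X] [DecidableEq X] (D : ℤ)
    (F : ℤ → Matrix X X ℂ) (hFsum : ∑ i ∈ Finset.Icc (0:ℤ) D, F i = 1)
    {M N : Matrix X X ℂ}
    (h : ∀ i ∈ Finset.Icc (0:ℤ) D, ∀ j ∈ Finset.Icc (0:ℤ) D, F i * M * F j = F i * N * F j) :
    M = N := by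
  have key : ∀ P : Matrix X X ℂ,
      P = ∑ i ∈ Finset.Icc (0:ℤ) D, ∑ j ∈ Finset.Icc (0:ℤ) D, F i * P * F j := by
    intro P
    calc P = (∑ i ∈ Finset.Icc (0:ℤ) D, F i) * P * (∑ j ∈ Finset.Icc (0:ℤ) D, F j) := by
            rw [hFsum, one_mul, mul_one]
    _ = ∑ i ∈ Finset.Icc (0:ℤ) D, ∑ j ∈ Finset.Icc (0:ℤ) D, F i * P * F j := by
        rw [Finset.sum_mul, Finset.sum_mul]
        exact Finset.sum_congr rfl fun i _ => by rw [Finset.mul_sum]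
  rw [key M, key N]
  exact Finset.sum_congr rfl fun i hi => Finset.sum_congr rfl fun j hj => h i hi j hj

lemma proj {X : Type*} [Fintype X] [DecidableEq X] (D : ℤ) (ϑ : ℤ → ℂ)
    (F : ℤ → Matrix X X ℂ)
    (hFmul : ∀ i ∈ Finset.Icc (0:ℤ) D, ∀ j ∈ Finset.Icc (0:ℤ) D,
      F i * F j = if i = j then F i else 0)
    (P : Matrix X X ℂ) (hP : P = ∑ k ∈ Finset.Icc (0:ℤ) D, ϑ k • F k)
    (i : ℤ) (hi : i ∈ Finset.Icc (0:ℤ) D) :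
    F i * P = ϑ i • F i ∧ P * F i = ϑ i • F i := by
  constructor
  · rw [hP, Finset.mul_sum]
    rw [Finset.sum_congr rfl (fun k hk => show F i * (ϑ k • F k) = if i = k then ϑ k • F i else 0 by
      rw [Matrix.mul_smul, hFmul i hi k hk]; split <;> simp_all)]
    rw [Finset.sum_ite_eq]
    simp [hi]
  · rw [hP, Finset.sum_mul]
    rw [Finset.sum_congr rfl (fun k hk => show (ϑ k • F k) * F i = if k = i then ϑ k • F i else 0 by
      rw [Matrix.smul_mul, hFmul k hk i hi]; split <;> simp_all)]
    rw [Finset.sum_ite_eq']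
    simp [hi]

lemma key_lemma {X : Type*} [Fintype X] [DecidableEq X]
    (D : ℤ) (q a : ℂ) (hq : q ≠ 0) (ha : a ≠ 0)
    (hq1 : q ^ 2 ≠ 1) (hq2 : q ^ 2 ≠ -1)
    (ϑ : ℤ → ℂ) (hϑ : ∀ i : ℤ, ϑ i = a * q ^ (2 * i - D) + a⁻¹ * q ^ (D - 2 * i))
    (F : ℤ → Matrix X X ℂ)
    (hFsum : ∑ i ∈ Finset.Icc (0:ℤ) D, F i = 1)
    (hFmul : ∀ i ∈ Finset.Icc (0:ℤ) D, ∀ j ∈ Finset.Icc (0:ℤ) D,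
      F i * F j = if i = j then F i else 0)
    (P Q Z : Matrix X X ℂ)
    (hP : P = ∑ k ∈ Finset.Icc (0:ℤ) D, ϑ k • F k)
    (htri : ∀ i ∈ Finset.Icc (0:ℤ) D, ∀ j ∈ Finset.Icc (0:ℤ) D,
      1 < |i - j| → F i * Q * F j = 0)
    (hZ : ∀ i ∈ Finset.Icc (0:ℤ) D,
      Z * F i = (1 + ϑ i / (q + q⁻¹)) • (F i * Q * F i) ∧
      F i * Z = (1 + ϑ i / (q + q⁻¹)) • (F i * Q * F i)) :
    ((q ^ (2:ℤ) - q ^ (-2:ℤ))^2) • Q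
      + ((q ^ (2:ℤ) - q ^ (-2:ℤ)) * q) • (P * Z)
      - ((q ^ (2:ℤ) - q ^ (-2:ℤ)) * q⁻¹) • (Z * P)
      - (q ^ (2:ℤ) + q ^ (-2:ℤ)) • (P * (Q * P))
      + P * (P * Q) + Q * (P * P)
      = ((q ^ (2:ℤ) - q ^ (-2:ℤ))^2) • Z := by
  have hqq : q + q⁻¹ ≠ 0 := by
    intro h
    apply hq2
    have : q ^ 2 + 1 = 0 := by field_simp at h; linear_combination h
    linear_combination this
  apply sandwich D F hFsum
  intro i hi j hj
  obtain ⟨hFPi, hPFi⟩ := proj D ϑ F hFmul P hP i hi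
  obtain ⟨hFPj, hPFj⟩ := proj D ϑ F hFmul P hP j hj
  have hZij : F i * Z * F j = if i = j then (1 + ϑ i / (q + q⁻¹)) • (F i * Q * F i) else 0 := by
    rw [(hZ i hi).2, Matrix.smul_mul]
    by_cases h : i = j
    · subst h
      rw [if_pos rfl, Matrix.mul_assoc (F i * Q), hFmul i hi i hi, if_pos rfl]
    · rw [if_neg h, Matrix.mul_assoc (F i * Q), hFmul i hi j hj, if_neg h, Matrix.mul_zero,
        smul_zero]
  have t2 : F i * (((q ^ (2:ℤ) - q ^ (-2:ℤ)) * q) • (P * Z)) * F j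
      = ((q ^ (2:ℤ) - q ^ (-2:ℤ)) * q * ϑ i) • (F i * Z * F j) := by
    rw [Matrix.mul_smul, Matrix.smul_mul, ← Matrix.mul_assoc, hFPi, Matrix.smul_mul,
      Matrix.smul_mul, smul_smul]
  have t3 : F i * (((q ^ (2:ℤ) - q ^ (-2:ℤ)) * q⁻¹) • (Z * P)) * F j
      = ((q ^ (2:ℤ) - q ^ (-2:ℤ)) * q⁻¹ * ϑ j) • (F i * Z * F j) := by
    rw [Matrix.mul_smul, Matrix.smul_mul, Matrix.mul_assoc (F i) (Z * P),
      Matrix.mul_assoc Z P, hPFj, Matrix.mul_smul, Matrix.mul_smul, smul_smul,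
      ← Matrix.mul_assoc]
  have t4 : F i * ((q ^ (2:ℤ) + q ^ (-2:ℤ)) • (P * (Q * P))) * F j
      = ((q ^ (2:ℤ) + q ^ (-2:ℤ)) * (ϑ i * ϑ j)) • (F i * Q * F j) := by
    have h4 : F i * (P * (Q * P)) * F j = (ϑ i * ϑ j) • (F i * Q * F j) := by
      rw [← Matrix.mul_assoc, hFPi, Matrix.smul_mul, Matrix.smul_mul,
        Matrix.mul_assoc (F i) (Q * P), Matrix.mul_assoc Q P, hPFj, Matrix.mul_smul,
        Matrix.mul_smul, smul_smul, ← Matrix.mul_assoc]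
    rw [Matrix.mul_smul, Matrix.smul_mul, h4, smul_smul]
  have t5 : F i * (P * (P * Q)) * F j = (ϑ i * ϑ i) • (F i * Q * F j) := by
    rw [← Matrix.mul_assoc, hFPi, Matrix.smul_mul, Matrix.smul_mul, ← Matrix.mul_assoc,
      hFPi, Matrix.smul_mul, Matrix.smul_mul, smul_smul]
  have t6 : F i * (Q * (P * P)) * F j = (ϑ j * ϑ j) • (F i * Q * F j) := by
    rw [← Matrix.mul_assoc, Matrix.mul_assoc (F i * Q) (P * P) (F j),
      Matrix.mul_assoc P P (F j), hPFj, Matrix.mul_smul, hPFj, smul_smul,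
      Matrix.mul_smul]
  simp only [Matrix.add_mul, Matrix.mul_add, Matrix.sub_mul, Matrix.mul_sub]
  rw [t2, t3, t4, t5, t6]
  rw [Matrix.mul_smul, Matrix.smul_mul, Matrix.mul_smul, Matrix.smul_mul]
  rw [hZij]
  by_cases h : i = j
  · subst h
    rw [if_pos rfl]
    have h2 : q ^ (2:ℤ) = q ^ 2 := by norm_cast
    have hm2 : q ^ (-2:ℤ) = (q ^ 2)⁻¹ := by rw [_root_.zpow_neg]; norm_cast
    have hqq : q + q⁻¹ ≠ 0 := hqq
    match_scalars
    rw [h2, hm2]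
    linear_combination scalar_diag q (ϑ i) hq hqq
  · rw [if_neg h]
    by_cases habs : 1 < |i - j|
    · rw [htri i hi j hj habs]
      simp
    · have hij : j = i + 1 ∨ j = i - 1 := by
        have := abs_le.mp (not_lt.mp habs)
        omega
      have hrec := theta_rec D q a hq ha ϑ hϑ i j hij
      match_scalars
      linear_combination hrec

set_option maxHeartbeats 1000000 in
theorem z3_symmetric_askey_wilson
    {X : Type*} [Fintype X] [DecidableEq X] [Nonempty X]
    (D : ℤ) (hD : 3 ≤ D) (q a : ℂ) (hq : q ≠ 0) (ha : a ≠ 0)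
    (hq1 : q ^ 2 ≠ 1) (hq2 : q ^ 2 ≠ -1)
    (ϑ : ℤ → ℂ)
    (hϑ : ∀ i : ℤ, ϑ i = a * q ^ (2 * i - D) + a⁻¹ * q ^ (D - 2 * i))
    (β : ℂ) (hβ : β = q ^ (2 : ℤ) + q ^ (-2 : ℤ))
    (E Estar : ℤ → Matrix X X ℂ)
    (hEsum : ∑ i ∈ Finset.Icc (0 : ℤ) D, E i = 1)
    (hEmul : ∀ i ∈ Finset.Icc (0 : ℤ) D, ∀ j ∈ Finset.Icc (0 : ℤ) D,
      E i * E j = if i = j then E i else 0)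
    (hEssum : ∑ i ∈ Finset.Icc (0 : ℤ) D, Estar i = 1)
    (hEsmul : ∀ i ∈ Finset.Icc (0 : ℤ) D, ∀ j ∈ Finset.Icc (0 : ℤ) D,
      Estar i * Estar j = if i = j then Estar i else 0)
    (A B : Matrix X X ℂ)
    (hA : A = ∑ i ∈ Finset.Icc (0 : ℤ) D, ϑ i • E i)
    (hB : B = ∑ i ∈ Finset.Icc (0 : ℤ) D, ϑ i • Estar i)
    (htriE : ∀ i ∈ Finset.Icc (0 : ℤ) D, ∀ j ∈ Finset.Icc (0 : ℤ) D,
      1 < |i - j| → E i * B * E j = 0)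
    (htriEs : ∀ i ∈ Finset.Icc (0 : ℤ) D, ∀ j ∈ Finset.Icc (0 : ℤ) D,
      1 < |i - j| → Estar i * A * Estar j = 0)
    (Z : Matrix X X ℂ)
    (hZE : ∀ i ∈ Finset.Icc (0 : ℤ) D,
      Z * E i = (1 + ϑ i / (q + q⁻¹)) • (E i * B * E i) ∧
      E i * Z = (1 + ϑ i / (q + q⁻¹)) • (E i * B * E i))
    (hZEs : ∀ i ∈ Finset.Icc (0 : ℤ) D,
      Z * Estar i = (1 + ϑ i / (q + q⁻¹)) • (Estar i * A * Estar i) ∧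
      Estar i * Z = (1 + ϑ i / (q + q⁻¹)) • (Estar i * A * Estar i))
    (C : Matrix X X ℂ)
    (hC : C = Z - (q ^ (2 : ℤ) - q ^ (-2 : ℤ))⁻¹ • (q • (A * B) - q⁻¹ • (B * A))) :
    (A + (q ^ (2 : ℤ) - q ^ (-2 : ℤ))⁻¹ • (q • (B * C) - q⁻¹ • (C * B)) = Z) ∧
    (B + (q ^ (2 : ℤ) - q ^ (-2 : ℤ))⁻¹ • (q • (C * A) - q⁻¹ • (A * C)) = Z) := by
  have hs : q ^ (2:ℤ) - q ^ (-2:ℤ) ≠ 0 := by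
    have h2 : q ^ (2:ℤ) = q^2 := by norm_cast
    have hm2 : q ^ (-2:ℤ) = (q^2)⁻¹ := by rw [_root_.zpow_neg]; norm_cast
    rw [h2, hm2]
    intro h
    have hq2' : q^2 ≠ 0 := pow_ne_zero _ hq
    have h4 : (q^2)*(q^2) = 1 := by field_simp at h; linear_combination h
    have h5 : (q^2-1)*(q^2+1) = 0 := by linear_combination h4
    rcases mul_eq_zero.1 h5 with h'|h'
    · exact hq1 (by linear_combination h')
    · exact hq2 (by linear_combination h')
  have hs2 : (q ^ (2:ℤ) - q ^ (-2:ℤ))^2 ≠ 0 := pow_ne_zero _ hs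
  have hkey1 := key_lemma D q a hq ha hq1 hq2 ϑ hϑ Estar hEssum hEsmul B A Z hB htriEs hZEs
  have hkey2 := key_lemma D q a hq ha hq1 hq2 ϑ hϑ E hEsum hEmul A B Z hA htriE hZE
  obtain ⟨s, hsdef⟩ : ∃ s' : ℂ, s' = q ^ (2:ℤ) - q ^ (-2:ℤ) := ⟨_, rfl⟩
  rw [← hsdef] at hs hs2 hkey1 hkey2 hC ⊢
  have hcommA : A * Z = Z * A := by
    rw [hA, Finset.sum_mul, Finset.mul_sum]
    exact Finset.sum_congr rfl fun i hi => by
      rw [Matrix.smul_mul, Matrix.mul_smul, (hZE i hi).1, (hZE i hi).2]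
  constructor
  · apply smul_right_injective (Matrix X X ℂ) hs2
    beta_reduce
    conv_rhs => rw [← hkey1]
    rw [hC]
    simp only [Matrix.mul_sub, Matrix.sub_mul, Matrix.mul_smul, Matrix.smul_mul, smul_sub,
      smul_add, smul_smul, Matrix.mul_assoc]
    have hss : s * s⁻¹ = 1 := mul_inv_cancel₀ hs
    have hqq1 : q * q⁻¹ = 1 := mul_inv_cancel₀ hq
    have hqm : (q:ℂ) ^ (-2:ℤ) = q⁻¹ * q⁻¹ := by
      rw [show (-2:ℤ) = -1 + -1 by ring, zpow_add₀ hq, _root_.zpow_neg_one]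
    have hqp : (q:ℂ) ^ (2:ℤ) = q * q := by
      rw [show (2:ℤ) = 1 + 1 by ring, zpow_add₀ hq, zpow_one]
    rw [hqm, hqp]
    match_scalars
    · ring1
    · linear_combination (s*q)*hss
    · linear_combination (-(q*q) - q⁻¹*q⁻¹)*(s*s⁻¹+1)*hss
    · linear_combination q*q⁻¹*(s*s⁻¹+1)*hss + hqq1
    · linear_combination (-(s*q⁻¹))*hss
    · linear_combination q*q⁻¹*(s*s⁻¹+1)*hss + hqq1
  · apply smul_right_injective (Matrix X X ℂ) hs2
    beta_reduce
    conv_rhs => rw [← hkey2]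
    rw [hC]
    simp only [hcommA, Matrix.mul_sub, Matrix.sub_mul, Matrix.mul_smul, Matrix.smul_mul,
      smul_sub, smul_add, smul_smul, Matrix.mul_assoc]
    have hss : s * s⁻¹ = 1 := mul_inv_cancel₀ hs
    have hqq1 : q * q⁻¹ = 1 := mul_inv_cancel₀ hq
    have hqm : (q:ℂ) ^ (-2:ℤ) = q⁻¹ * q⁻¹ := by
      rw [show (-2:ℤ) = -1 + -1 by ring, zpow_add₀ hq, _root_.zpow_neg_one]
    have hqp : (q:ℂ) ^ (2:ℤ) = q * q := by
      rw [show (2:ℤ) = 1 + 1 by ring, zpow_add₀ hq, zpow_one]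
    rw [hqm, hqp]
    match_scalars
    · ring1
    · linear_combination (s*(q-q⁻¹))*hss
    · linear_combination (-(q*q) - q⁻¹*q⁻¹)*(s*s⁻¹+1)*hss
    · linear_combination q*q⁻¹*(s*s⁻¹+1)*hss + hqq1
    · linear_combination q*q⁻¹*(s*s⁻¹+1)*hss + hqq1
end

section
/- Let W = Σ_{i=0}^D α_i·E_i with all α_i ≠ 0. Then W is invertible with W^{−1} = Σ_{i=0}^D α_i^{−1}·E_i, and C − W^{−1}·B·W = Σ_{0≤i,j≤D, |i−j|=1} ((q^{−1}·ϑ_j − q·ϑ_i)/(q² − q^{−2}) − α_j/α_i) · E_i·B·E_j. -/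
open Matrix Finset

theorem intertwiner_difference_M
    {X : Type*} [Fintype X] [DecidableEq X] [Nonempty X]
    (D : ℤ) (hD : 3 ≤ D) (q a : ℂ) (hq : q ≠ 0) (ha : a ≠ 0)
    (hq1 : q ^ 2 ≠ 1) (hq2 : q ^ 2 ≠ -1)
    (ϑ : ℤ → ℂ)
    (hϑ : ∀ i : ℤ, ϑ i = a * q ^ (2 * i - D) + a⁻¹ * q ^ (D - 2 * i))
    (β : ℂ) (hβ : β = q ^ (2 : ℤ) + q ^ (-2 : ℤ))
    (E : ℤ → Matrix X X ℂ)
    (hEsum : ∑ i ∈ Finset.Icc (0 : ℤ) D, E i = 1)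
    (hEmul : ∀ i ∈ Finset.Icc (0 : ℤ) D, ∀ j ∈ Finset.Icc (0 : ℤ) D,
      E i * E j = if i = j then E i else 0)
    (B : Matrix X X ℂ)
    (htriE : ∀ i ∈ Finset.Icc (0 : ℤ) D, ∀ j ∈ Finset.Icc (0 : ℤ) D,
      1 < |i - j| → E i * B * E j = 0)
    (A : Matrix X X ℂ)
    (hA : A = ∑ i ∈ Finset.Icc (0 : ℤ) D, ϑ i • E i)
    (Z : Matrix X X ℂ)
    (hZE : ∀ i ∈ Finset.Icc (0 : ℤ) D,
      Z * E i = (1 + ϑ i / (q + q⁻¹)) • (E i * B * E i) ∧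
      E i * Z = (1 + ϑ i / (q + q⁻¹)) • (E i * B * E i))
    (C : Matrix X X ℂ)
    (hC : C = Z - (q ^ (2 : ℤ) - q ^ (-2 : ℤ))⁻¹ • (q • (A * B) - q⁻¹ • (B * A)))
    (α : ℤ → ℂ) (hα : ∀ i ∈ Finset.Icc (0 : ℤ) D, α i ≠ 0)
    (W : Matrix X X ℂ)
    (hW : W = ∑ i ∈ Finset.Icc (0 : ℤ) D, α i • E i)
    :
    IsUnit W ∧
    W⁻¹ = ∑ i ∈ Finset.Icc (0 : ℤ) D, (α i)⁻¹ • E i ∧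
    C - W⁻¹ * B * W =
      ∑ i ∈ Finset.Icc (0 : ℤ) D, ∑ j ∈ Finset.Icc (0 : ℤ) D,
        if |i - j| = 1 then
          ((q⁻¹ * ϑ j - q * ϑ i) / (q ^ (2 : ℤ) - q ^ (-2 : ℤ)) - α j / α i) •
            (E i * B * E j)
        else 0 := by
  set S := Finset.Icc (0 : ℤ) D with hS
  set W' : Matrix X X ℂ := ∑ i ∈ S, (α i)⁻¹ • E i with hW'def
  have hqq : q + q⁻¹ ≠ 0 := by
    intro h; apply hq2; field_simp at h; linear_combination h
  -- W * W' = 1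
  have hWW' : W * W' = 1 := by
    rw [hW, hW'def, Finset.sum_mul_sum]
    calc ∑ i ∈ S, ∑ j ∈ S, (α i • E i) * ((α j)⁻¹ • E j)
        = ∑ i ∈ S, ∑ j ∈ S, (α i * (α j)⁻¹) • (E i * E j) :=
          Finset.sum_congr rfl fun i _ => Finset.sum_congr rfl fun j _ => by
            rw [smul_mul_assoc, mul_smul_comm, smul_smul]
      _ = ∑ i ∈ S, E i := by
          refine Finset.sum_congr rfl fun i hi => ?_
          rw [Finset.sum_congr rfl fun j hj => by rw [hEmul i hi j hj]]
          simp only [smul_ite, smul_zero]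
          rw [Finset.sum_ite_eq S i (fun j => (α i * (α j)⁻¹) • E i), if_pos hi,
            mul_inv_cancel₀ (hα i hi), one_smul]
      _ = 1 := hEsum
  have hW'W : W' * W = 1 := by
    rw [hW, hW'def, Finset.sum_mul_sum]
    calc ∑ i ∈ S, ∑ j ∈ S, ((α i)⁻¹ • E i) * (α j • E j)
        = ∑ i ∈ S, ∑ j ∈ S, ((α i)⁻¹ * α j) • (E i * E j) :=
          Finset.sum_congr rfl fun i _ => Finset.sum_congr rfl fun j _ => by
            rw [smul_mul_assoc, mul_smul_comm, smul_smul]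
      _ = ∑ i ∈ S, E i := by
          refine Finset.sum_congr rfl fun i hi => ?_
          rw [Finset.sum_congr rfl fun j hj => by rw [hEmul i hi j hj]]
          simp only [smul_ite, smul_zero]
          rw [Finset.sum_ite_eq S i (fun j => ((α i)⁻¹ * α j) • E i), if_pos hi,
            inv_mul_cancel₀ (hα i hi), one_smul]
      _ = 1 := hEsum
  have hunit : IsUnit W := ⟨⟨W, W', hWW', hW'W⟩, rfl⟩
  have hinv : W⁻¹ = W' := Matrix.inv_eq_right_inv hWW'
  refine ⟨hunit, hinv, ?_⟩
  -- decompose everything as double sums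
  have hZ2 : Z = ∑ i ∈ S, ∑ j ∈ S,
      (if i = j then (1 + ϑ i / (q + q⁻¹)) else 0) • (E i * B * E j) := by
    have : Z = ∑ i ∈ S, (1 + ϑ i / (q + q⁻¹)) • (E i * B * E i) := by
      calc Z = Z * 1 := (mul_one Z).symm
        _ = ∑ i ∈ S, Z * E i := by rw [← hEsum, Finset.mul_sum]
        _ = _ := Finset.sum_congr rfl fun i hi => (hZE i hi).1
    rw [this]
    refine Finset.sum_congr rfl fun i hi => ?_
    simp only [ite_smul, zero_smul]
    rw [Finset.sum_ite_eq S i (fun j => (1 + ϑ i / (q + q⁻¹)) • (E i * B * E j)),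
      if_pos hi]
  have hAB2 : A * B = ∑ i ∈ S, ∑ j ∈ S, ϑ i • (E i * B * E j) := by
    calc A * B = (∑ i ∈ S, ϑ i • E i) * B * (∑ j ∈ S, E j) := by
          rw [hA, hEsum, mul_one]
      _ = _ := by
          rw [Finset.sum_mul, Finset.sum_mul]
          refine Finset.sum_congr rfl fun i hi => ?_
          rw [Finset.mul_sum]
          exact Finset.sum_congr rfl fun j hj => by
            rw [smul_mul_assoc, smul_mul_assoc]
  have hBA2 : B * A = ∑ i ∈ S, ∑ j ∈ S, ϑ j • (E i * B * E j) := by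
    calc B * A = (∑ i ∈ S, E i) * (B * (∑ j ∈ S, ϑ j • E j)) := by
          rw [hA, hEsum, one_mul]
      _ = _ := by
          rw [Finset.sum_mul]
          refine Finset.sum_congr rfl fun i hi => ?_
          rw [Finset.mul_sum, Finset.mul_sum]
          refine Finset.sum_congr rfl fun j hj => ?_
          rw [mul_smul_comm, mul_smul_comm, ← mul_assoc]

  have hWBW : W' * B * W = ∑ i ∈ S, ∑ j ∈ S, ((α i)⁻¹ * α j) • (E i * B * E j) := by
    rw [hW, hW'def, Finset.sum_mul, Finset.sum_mul]
    refine Finset.sum_congr rfl fun i hi => ?_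
    rw [Finset.mul_sum]
    refine Finset.sum_congr rfl fun j hj => ?_
    rw [mul_smul_comm, smul_mul_assoc, smul_mul_assoc, smul_smul, mul_comm]
  rw [hC, hinv, hZ2, hAB2, hBA2, hWBW]
  simp only [Finset.smul_sum, ← Finset.sum_sub_distrib]
  refine Finset.sum_congr rfl fun i hi => Finset.sum_congr rfl fun j hj => ?_
  have hc : q ^ (2:ℤ) - q ^ (-2:ℤ) ≠ 0 := by
    intro h
    rw [_root_.zpow_neg, show ((2:ℤ)) = ((2:ℕ):ℤ) by norm_num, zpow_natCast] at h
    have h4 : q ^ 4 = 1 := by field_simp at h; linear_combination h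
    have h0 : (q ^ 2 - 1) * (q ^ 2 + 1) = 0 := by linear_combination h4
    rcases mul_eq_zero.1 h0 with h' | h'
    · exact hq1 (by linear_combination h')
    · exact hq2 (by linear_combination h')
  by_cases hij : i = j
  · subst hij
    rw [if_pos rfl, if_neg (show ¬ |i - i| = (1:ℤ) by simp), inv_mul_cancel₀ (hα i hi)]
    match_scalars
    rw [_root_.zpow_neg, show ((2:ℤ)) = ((2:ℕ):ℤ) by norm_num, zpow_natCast] at hc ⊢
    have h2 : q * q + 1 ≠ 0 := fun h => hq2 (by linear_combination h)
    have h4 : q ^ 2 * q ^ 2 - 1 ≠ 0 := by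
      intro h
      have h0 : (q ^ 2 - 1) * (q ^ 2 + 1) = 0 := by linear_combination h
      rcases mul_eq_zero.1 h0 with h' | h'
      · exact hq1 (by linear_combination h')
      · exact hq2 (by linear_combination h')
    field_simp
    ring_nf
    have h5 : (1 + q ^ 2) ≠ 0 := fun h => hq2 (by linear_combination h)
    have h6 : (-1 + q ^ 4) ≠ 0 := fun h => h4 (by linear_combination h)
    field_simp
    ring
  · by_cases h1 : |i - j| = 1
    · rw [if_neg hij, if_pos h1]
      match_scalars
      ring
    · have hgt : 1 < |i - j| := by
        rcases abs_cases (i - j) with ⟨he, _⟩ | ⟨he, _⟩ <;> omega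
      rw [htriE i hi j hj hgt]
      simp [if_neg h1, if_neg hij]
end

section
/- Let W = Σ_{i=0}^D α_i·E_i with all α_i ≠ 0, and assume the matrices E_i·B·E_j with 0 ≤ i,j ≤ D and |i−j| = 1 are linearly independent. Then W^{−1}·B·W = C if and only if α_i = α_0·(−1)^i·a^{−i}·q^{i(D−i)} for 0 ≤ i ≤ D (equivalently, α_i/α_{i−1} = −a^{−1}·q^{D−2i+1} for 1 ≤ i ≤ D). -/
open Matrix Finset

set_option maxHeartbeats 1000000 in
theorem intertwiner_characterization_M
    {X : Type*} [Fintype X] [DecidableEq X] [Nonempty X]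
    (D : ℤ) (hD : 3 ≤ D) (q a : ℂ) (hq : q ≠ 0) (ha : a ≠ 0)
    (hq1 : q ^ 2 ≠ 1) (hq2 : q ^ 2 ≠ -1)
    (ϑ : ℤ → ℂ)
    (hϑ : ∀ i : ℤ, ϑ i = a * q ^ (2 * i - D) + a⁻¹ * q ^ (D - 2 * i))
    (β : ℂ) (hβ : β = q ^ (2 : ℤ) + q ^ (-2 : ℤ))
    (E : ℤ → Matrix X X ℂ)
    (hEsum : ∑ i ∈ Finset.Icc (0 : ℤ) D, E i = 1)
    (hEmul : ∀ i ∈ Finset.Icc (0 : ℤ) D, ∀ j ∈ Finset.Icc (0 : ℤ) D,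
      E i * E j = if i = j then E i else 0)
    (B : Matrix X X ℂ)
    (htriE : ∀ i ∈ Finset.Icc (0 : ℤ) D, ∀ j ∈ Finset.Icc (0 : ℤ) D,
      1 < |i - j| → E i * B * E j = 0)
    (A : Matrix X X ℂ)
    (hA : A = ∑ i ∈ Finset.Icc (0 : ℤ) D, ϑ i • E i)
    (Z : Matrix X X ℂ)
    (hZE : ∀ i ∈ Finset.Icc (0 : ℤ) D,
      Z * E i = (1 + ϑ i / (q + q⁻¹)) • (E i * B * E i) ∧
      E i * Z = (1 + ϑ i / (q + q⁻¹)) • (E i * B * E i))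
    (C : Matrix X X ℂ)
    (hC : C = Z - (q ^ (2 : ℤ) - q ^ (-2 : ℤ))⁻¹ • (q • (A * B) - q⁻¹ • (B * A)))
    (α : ℤ → ℂ) (hα : ∀ i ∈ Finset.Icc (0 : ℤ) D, α i ≠ 0)
    (W : Matrix X X ℂ)
    (hW : W = ∑ i ∈ Finset.Icc (0 : ℤ) D, α i • E i)
    (hind : LinearIndependent ℂ
      (fun p : {p : ℤ × ℤ // p.1 ∈ Finset.Icc (0 : ℤ) D ∧
          p.2 ∈ Finset.Icc (0 : ℤ) D ∧ |p.1 - p.2| = 1} =>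
        E p.val.1 * B * E p.val.2)) :
    (W⁻¹ * B * W = C ↔
      ∀ i ∈ Finset.Icc (0 : ℤ) D,
        α i = α 0 * (-1 : ℂ) ^ i * a ^ (-i) * q ^ (i * (D - i))) ∧
    ((∀ i ∈ Finset.Icc (0 : ℤ) D,
        α i = α 0 * (-1 : ℂ) ^ i * a ^ (-i) * q ^ (i * (D - i))) ↔
      ∀ i : ℤ, 1 ≤ i → i ≤ D →
        α i / α (i - 1) = -(a⁻¹ * q ^ (D - 2 * i + 1))) := by
  classical
  set S := Finset.Icc (0 : ℤ) D with hSdef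
  -- basic scalar facts
  have hq2e : q ^ (2:ℤ) = q * q := by
    rw [show (2:ℤ) = 1 + 1 by norm_num, zpow_add₀ hq, zpow_one]
  have hqm2e : q ^ (-2:ℤ) = (q * q)⁻¹ := by
    rw [show (-2:ℤ) = -(2:ℤ) by norm_num, _root_.zpow_neg, hq2e]
  have hqp : q + q⁻¹ ≠ 0 := by
    intro h
    apply hq2
    have h2 : q ^ 2 + 1 = q * (q + q⁻¹) := by field_simp
    rw [h, mul_zero] at h2
    linear_combination h2
  have hq4 : q ^ 4 - 1 ≠ 0 := by
    intro h
    have h' : (q ^ 2 - 1) * (q ^ 2 + 1) = 0 := by linear_combination h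
    rcases mul_eq_zero.mp h' with h'' | h''
    · exact hq1 (by linear_combination h'')
    · exact hq2 (by linear_combination h'')
  have hqq' : q * q - (q * q)⁻¹ ≠ 0 := by
    intro h
    apply hq4
    field_simp at h
    linear_combination h
  have hqq : q ^ (2:ℤ) - q ^ (-2:ℤ) ≠ 0 := by rw [hq2e, hqm2e]; exact hqq'
  -- the coefficient function for C
  set c : ℤ → ℤ → ℂ := fun i j =>
    if i = j then 1 else -((q ^ (2:ℤ) - q ^ (-2:ℤ))⁻¹ * (q * ϑ i - q⁻¹ * ϑ j)) with hcdef
  -- scalar lemmas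
  have L1 : ∀ i : ℤ, -((q ^ (2:ℤ) - q ^ (-2:ℤ))⁻¹ * (q * ϑ (i - 1) - q⁻¹ * ϑ i))
      = -(a⁻¹ * q ^ (D - 2 * i + 1)) := by
    intro i
    rw [hϑ, hϑ]
    rw [show 2 * (i - 1) - D = (2 * i - D) + -2 by ring,
        show D - 2 * (i - 1) = -(2 * i - D) + 2 by ring,
        show D - 2 * i = -(2 * i - D) by ring]
    simp only [zpow_add₀ hq, _root_.zpow_neg, zpow_one, hq2e]
    have htne : q ^ (2 * i - D) ≠ 0 := zpow_ne_zero _ hq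
    rw [neg_inj, inv_mul_eq_iff_eq_mul₀ hqq']
    field_simp
    ring
  have L2 : ∀ i : ℤ, -((q ^ (2:ℤ) - q ^ (-2:ℤ))⁻¹ * (q * ϑ i - q⁻¹ * ϑ (i - 1)))
      = -(a * q ^ (2 * i - D - 1)) := by
    intro i
    rw [hϑ, hϑ]
    rw [show 2 * (i - 1) - D = (2 * i - D) + -2 by ring,
        show D - 2 * (i - 1) = -(2 * i - D) + 2 by ring,
        show D - 2 * i = -(2 * i - D) by ring,
        show 2 * i - D - 1 = (2 * i - D) + -1 by ring]
    simp only [zpow_add₀ hq, _root_.zpow_neg, zpow_one, hq2e]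
    have htne : q ^ (2 * i - D) ≠ 0 := zpow_ne_zero _ hq
    rw [neg_inj, inv_mul_eq_iff_eq_mul₀ hqq']
    field_simp
    ring
  -- membership facts
  have hmem : ∀ i : ℤ, i ∈ S ↔ 0 ≤ i ∧ i ≤ D := by
    intro i; rw [hSdef, Finset.mem_Icc]
  -- E and A multiplication facts
  have hEA : ∀ i ∈ S, E i * A = ϑ i • E i := by
    intro i hi
    rw [hA, Finset.mul_sum, Finset.sum_eq_single i]
    · rw [mul_smul_comm, hEmul i hi i hi, if_pos rfl]
    · intro j hj hji
      rw [mul_smul_comm, hEmul i hi j hj, if_neg (fun h => hji h.symm), smul_zero]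
    · intro h; exact absurd hi h
  have hAE : ∀ j ∈ S, A * E j = ϑ j • E j := by
    intro j hj
    rw [hA, Finset.sum_mul, Finset.sum_eq_single j]
    · rw [smul_mul_assoc, hEmul j hj j hj, if_pos rfl]
    · intro i hi hij
      rw [smul_mul_assoc, hEmul i hi j hj, if_neg hij, smul_zero]
    · intro h; exact absurd hj h
  -- triple product decomposition
  have htriple : ∀ (f g : ℤ → ℂ) (M : Matrix X X ℂ),
      (∑ i ∈ S, f i • E i) * M * (∑ j ∈ S, g j • E j)
        = ∑ i ∈ S, ∑ j ∈ S, (f i * g j) • (E i * M * E j) := by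
    intro f g M
    rw [Finset.sum_mul, Finset.sum_mul]
    refine Finset.sum_congr rfl fun i _ => ?_
    rw [Finset.mul_sum]
    refine Finset.sum_congr rfl fun j _ => ?_
    rw [smul_mul_assoc, smul_mul_assoc, mul_smul_comm, smul_smul]
  -- product of two spectral sums
  have hmulEE : ∀ (f g : ℤ → ℂ),
      (∑ i ∈ S, f i • E i) * (∑ j ∈ S, g j • E j) = ∑ i ∈ S, (f i * g i) • E i := by
    intro f g
    rw [Finset.sum_mul]
    refine Finset.sum_congr rfl fun i hi => ?_
    rw [Finset.mul_sum, Finset.sum_eq_single i]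
    · rw [smul_mul_assoc, mul_smul_comm, smul_smul, hEmul i hi i hi, if_pos rfl]
    · intro j hj hji
      rw [smul_mul_assoc, mul_smul_comm, smul_smul, hEmul i hi j hj,
        if_neg (fun h => hji h.symm), smul_zero]
    · intro h; exact absurd hi h
  -- the inverse of W
  have hWinv : W⁻¹ = ∑ i ∈ S, (α i)⁻¹ • E i := by
    apply Matrix.inv_eq_right_inv
    rw [hW, hmulEE, ← hEsum]
    refine Finset.sum_congr rfl fun i hi => ?_
    rw [mul_inv_cancel₀ (hα i hi), one_smul]
  -- blocks of Z
  have hEZE : ∀ i ∈ S, ∀ j ∈ S, E i * Z * E j =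
      if i = j then (1 + ϑ i / (q + q⁻¹)) • (E i * B * E i) else 0 := by
    intro i hi j hj
    rw [(hZE i hi).2, smul_mul_assoc, mul_assoc, mul_assoc, hEmul i hi j hj]
    by_cases h : i = j
    · rw [if_pos h, if_pos h, mul_assoc]
    · rw [if_neg h, if_neg h, mul_zero, mul_zero, smul_zero]
  -- blocks of C
  have hECE : ∀ i ∈ S, ∀ j ∈ S, E i * C * E j = c i j • (E i * B * E j) := by
    intro i hi j hj
    have hEAB : E i * (A * B) * E j = ϑ i • (E i * B * E j) := by
      rw [← mul_assoc, hEA i hi, smul_mul_assoc, smul_mul_assoc]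
    have hEBA : E i * (B * A) * E j = ϑ j • (E i * B * E j) := by
      rw [← mul_assoc, mul_assoc (E i * B) A (E j), hAE j hj, mul_smul_comm]
    have expand : E i * C * E j =
        E i * Z * E j - (q ^ (2:ℤ) - q ^ (-2:ℤ))⁻¹ •
          (q • (E i * (A * B) * E j) - q⁻¹ • (E i * (B * A) * E j)) := by
      rw [hC]
      simp only [Matrix.mul_sub, Matrix.sub_mul, Matrix.mul_smul, Matrix.smul_mul, smul_sub]
    rw [expand, hEAB, hEBA, hEZE i hi j hj]
    simp only [hcdef]
    by_cases h : i = j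
    · subst h
      simp only [eq_self_iff_true, if_true]
      have hsc : (1 + ϑ i / (q + q⁻¹)) - (q ^ (2:ℤ) - q ^ (-2:ℤ))⁻¹ * (q * ϑ i - q⁻¹ * ϑ i)
          = 1 := by
        rw [hq2e, hqm2e]
        have h1 : (1:ℂ) + q ^ 2 ≠ 0 := by
          intro h; exact hq2 (by linear_combination h)
        have h2 : -q + q ^ 5 ≠ 0 := by
          intro h
          apply hq4
          apply mul_left_cancel₀ hq
          rw [mul_zero]
          linear_combination h
        have key : (q*q - (q*q)⁻¹)⁻¹ * (q * ϑ i - q⁻¹ * ϑ i) = ϑ i / (q + q⁻¹) := by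
          have h3 : q ^ 2 + q ^ 4 ≠ 0 := by
            intro h
            apply h1
            apply mul_left_cancel₀ (pow_ne_zero 2 hq)
            rw [mul_zero]
            linear_combination h
          rw [inv_mul_eq_iff_eq_mul₀ hqq']
          field_simp [h1, h3]
          have hk : (q ^ 2 + q ^ 4) * (q ^ 2 + q ^ 4)⁻¹ = 1 := mul_inv_cancel₀ h3
          have hu : (1 + q ^ 2) * (1 + q ^ 2)⁻¹ = 1 := mul_inv_cancel₀ h1
          linear_combination ϑ i * (q ^ 4 - 1) * ((1 + q ^ 2)⁻¹ * hk - q ^ 2 * (q ^ 2 + q ^ 4)⁻¹ * hu) - ϑ i * (q ^ 2 - 1) * hk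
        rw [key]
        ring
      match_scalars
      linear_combination hsc
    · simp only [if_neg h]
      match_scalars
      ring
  -- decomposition of both sides
  have hLHS : W⁻¹ * B * W = ∑ i ∈ S, ∑ j ∈ S, ((α i)⁻¹ * α j) • (E i * B * E j) := by
    rw [hWinv]
    nth_rewrite 1 [hW]
    exact htriple _ _ B
  have hRHS : C = ∑ i ∈ S, ∑ j ∈ S, c i j • (E i * B * E j) := by
    have h1 : (∑ i ∈ S, (1:ℂ) • E i) = 1 := by simpa using hEsum
    have h2 := htriple (fun _ => (1:ℂ)) (fun _ => (1:ℂ)) C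
    rw [h1, one_mul, mul_one] at h2
    rw [h2]
    refine Finset.sum_congr rfl fun i hi => Finset.sum_congr rfl fun j hj => ?_
    rw [hECE i hi j hj, one_mul, one_smul]
  set Pd : ℤ × ℤ → Prop := fun p => p.1 ∈ S ∧ p.2 ∈ S ∧ |p.1 - p.2| = 1 with hPd
  letI : DecidablePred Pd := fun p =>
    inferInstanceAs (Decidable (p.1 ∈ S ∧ p.2 ∈ S ∧ |p.1 - p.2| = 1))
  have hdiff : W⁻¹ * B * W - C = ∑ x ∈ Finset.subtype Pd (S ×ˢ S),
      ((α (x : ℤ × ℤ).1)⁻¹ * α (x : ℤ × ℤ).2 - c (x : ℤ × ℤ).1 (x : ℤ × ℤ).2)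
        • (E (x : ℤ × ℤ).1 * B * E (x : ℤ × ℤ).2) := by
    rw [Finset.sum_subtype_eq_sum_filter
      (fun p : ℤ × ℤ => ((α p.1)⁻¹ * α p.2 - c p.1 p.2) • (E p.1 * B * E p.2))]
    rw [hLHS, hRHS, ← Finset.sum_sub_distrib]
    have e1 : ∀ i ∈ S, ((∑ j ∈ S, ((α i)⁻¹ * α j) • (E i * B * E j))
        - ∑ j ∈ S, c i j • (E i * B * E j))
        = ∑ j ∈ S, ((α i)⁻¹ * α j - c i j) • (E i * B * E j) := by
      intro i _
      rw [← Finset.sum_sub_distrib]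
      exact Finset.sum_congr rfl fun j _ => (sub_smul _ _ _).symm
    rw [Finset.sum_congr rfl e1, ← Finset.sum_product']
    rw [← Finset.sum_filter_add_sum_filter_not (S ×ˢ S) Pd]
    have hz : (∑ p ∈ (S ×ˢ S).filter (fun p => ¬ Pd p),
        ((α p.1)⁻¹ * α p.2 - c p.1 p.2) • (E p.1 * B * E p.2)) = 0 := by
      apply Finset.sum_eq_zero
      intro p hp
      obtain ⟨hpS, hnPd⟩ := Finset.mem_filter.mp hp
      obtain ⟨h1, h2⟩ := Finset.mem_product.mp hpS
      have hne : ¬ |p.1 - p.2| = 1 := fun hc => hnPd ⟨h1, h2, hc⟩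
      by_cases he : p.1 = p.2
      · have : c p.1 p.2 = 1 := by simp only [hcdef]; rw [if_pos he]
        rw [this, he, inv_mul_cancel₀ (hα p.2 h2), sub_self, zero_smul]
      · have hgt : 1 < |p.1 - p.2| := by
          rcases abs_cases (p.1 - p.2) with ⟨ha1, ha2⟩ | ⟨ha1, ha2⟩ <;> omega
        rw [htriE p.1 h1 p.2 h2 hgt, smul_zero]
    rw [hz, add_zero]
  have hiff1 : W⁻¹ * B * W = C ↔
      (∀ i ∈ S, ∀ j ∈ S, |i - j| = 1 → (α i)⁻¹ * α j = c i j) := by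
    rw [← sub_eq_zero, hdiff]
    constructor
    · intro h i hi j hj hij
      have hz := linearIndependent_iff'.mp hind (Finset.subtype Pd (S ×ˢ S))
        (fun x => (α (x : ℤ × ℤ).1)⁻¹ * α (x : ℤ × ℤ).2 - c (x : ℤ × ℤ).1 (x : ℤ × ℤ).2)
        h ⟨(i, j), ⟨hi, hj, hij⟩⟩
        (Finset.mem_subtype.mpr (Finset.mem_product.mpr ⟨hi, hj⟩))
      exact sub_eq_zero.mp hz
    · intro h
      apply Finset.sum_eq_zero
      intro x _
      obtain ⟨h1, h2, h3⟩ := x.prop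
      rw [h (x : ℤ × ℤ).1 h1 (x : ℤ × ℤ).2 h2 h3, sub_self, zero_smul]
  -- coefficient condition vs ratio recursion
  have hiff2 : (∀ i ∈ S, ∀ j ∈ S, |i - j| = 1 → (α i)⁻¹ * α j = c i j) ↔
      (∀ i : ℤ, 1 ≤ i → i ≤ D → α i / α (i - 1) = -(a⁻¹ * q ^ (D - 2 * i + 1))) := by
    constructor
    · intro h i h1 hiD
      have hi1 : i - 1 ∈ S := (hmem _).mpr ⟨by omega, by omega⟩
      have hiS : i ∈ S := (hmem _).mpr ⟨by omega, by omega⟩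
      have habs : |i - 1 - i| = 1 := by
        rw [show i - 1 - i = -1 by ring]
        norm_num
      have hc := h (i - 1) hi1 i hiS habs
      rw [div_eq_mul_inv, mul_comm, hc]
      simp only [hcdef]
      rw [if_neg (show ¬ (i - 1 = i) by omega)]
      exact L1 i
    · intro h i hi j hj hij
      have hiB := (hmem i).mp hi
      have hjB := (hmem j).mp hj
      have hcase : j = i - 1 ∨ j = i + 1 := by
        rcases abs_cases (i - j) with ⟨ha1, ha2⟩ | ⟨ha1, ha2⟩ <;> omega
      rcases hcase with rfl | rfl
      · -- j = i - 1
        have hrf := h i (by omega) (by omega)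
        have hαj := hα (i - 1) hj
        have hv : α i = (-(a⁻¹ * q ^ (D - 2 * i + 1))) * α (i - 1) :=
          (div_eq_iff hαj).mp hrf
        have hr1 : (-(a⁻¹ * q ^ (D - 2 * i + 1))) * (-(a * q ^ (2 * i - D - 1))) = 1 := by
          rw [neg_mul_neg, mul_mul_mul_comm, inv_mul_cancel₀ ha, one_mul,
            ← zpow_add₀ hq, show (D - 2 * i + 1) + (2 * i - D - 1) = 0 by ring, zpow_zero]
        rw [hv, _root_.mul_inv_rev, mul_right_comm, inv_mul_cancel₀ hαj, one_mul]
        simp only [hcdef]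
        rw [if_neg (show ¬ (i = i - 1) by omega), L2 i]
        exact inv_eq_of_mul_eq_one_right hr1
      · -- j = i + 1
        have hrf := h (i + 1) (by omega) (by omega)
        rw [show i + 1 - 1 = i by ring] at hrf
        have hL := L1 (i + 1)
        rw [show i + 1 - 1 = i by ring] at hL
        simp only [hcdef]
        rw [if_neg (show ¬ (i = i + 1) by omega), hL, mul_comm, ← div_eq_mul_inv]
        exact hrf
  -- product formula step
  have hprod_succ : ∀ i : ℤ, (-1 : ℂ) ^ (i + 1) * a ^ (-(i + 1)) * q ^ ((i + 1) * (D - (i + 1)))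
      = (-1 : ℂ) ^ i * a ^ (-i) * q ^ (i * (D - i)) * (-(a⁻¹ * q ^ (D - 2 * (i + 1) + 1))) := by
    intro i
    have h1 : (-1 : ℂ) ^ (i + 1) = (-1 : ℂ) ^ i * (-1) := by
      rw [zpow_add_one₀ (by norm_num : (-1 : ℂ) ≠ 0)]
    have h2 : a ^ (-(i + 1)) = a ^ (-i) * a⁻¹ := by
      rw [show -(i + 1) = -i - 1 by ring, zpow_sub_one₀ ha]
    have h3 : q ^ ((i + 1) * (D - (i + 1))) = q ^ (i * (D - i)) * q ^ (D - 2 * (i + 1) + 1) := by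
      rw [← zpow_add₀ hq]
      congr 1
      ring
    rw [h1, h2, h3]
    ring
  -- product formula vs ratio recursion
  have hiff3 : (∀ i ∈ S, α i = α 0 * (-1 : ℂ) ^ i * a ^ (-i) * q ^ (i * (D - i))) ↔
      (∀ i : ℤ, 1 ≤ i → i ≤ D → α i / α (i - 1) = -(a⁻¹ * q ^ (D - 2 * i + 1))) := by
    constructor
    · intro h i h1 hiD
      obtain ⟨n, rfl⟩ : ∃ n, i = n + 1 := ⟨i - 1, by ring⟩
      have hnmem : n ∈ S := (hmem n).mpr ⟨by omega, by omega⟩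
      have hn1mem : n + 1 ∈ S := (hmem _).mpr ⟨by omega, by omega⟩
      have e1 := h (n + 1) hn1mem
      have e0 := h n hnmem
      rw [show n + 1 - 1 = n by ring]
      have hv : α (n + 1) = α n * (-(a⁻¹ * q ^ (D - 2 * (n + 1) + 1))) := by
        rw [e1, e0]
        linear_combination α 0 * hprod_succ n
      rw [hv]
      exact mul_div_cancel_left₀ _ (hα n hnmem)
    · intro h
      have main : ∀ i : ℤ, 0 ≤ i → i ≤ D →
          α i = α 0 * (-1 : ℂ) ^ i * a ^ (-i) * q ^ (i * (D - i)) := by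
        intro i hi
        refine Int.le_induction (motive := fun i _ => i ≤ D →
          α i = α 0 * (-1 : ℂ) ^ i * a ^ (-i) * q ^ (i * (D - i))) ?_ ?_ i hi
        · intro _; simp
        · intro n hn ih hnD
          have hih := ih (by omega)
          have hnmem : n ∈ S := (hmem n).mpr ⟨hn, by omega⟩
          have hrf := h (n + 1) (by omega) hnD
          rw [show n + 1 - 1 = n by ring] at hrf
          have hv : α (n + 1) = α n * (-(a⁻¹ * q ^ (D - 2 * (n + 1) + 1))) := by
            rw [← hrf, mul_comm, div_mul_cancel₀ _ (hα n hnmem)]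
          rw [hv, hih]
          linear_combination (-(α 0)) * hprod_succ n
      intro i hi
      exact main i ((hmem i).mp hi).1 ((hmem i).mp hi).2
  exact ⟨hiff1.trans (hiff2.trans hiff3.symm), hiff3⟩
end

section
/- Let W* = Σ_{i=0}^D α*_i·E*_i with all α*_i ≠ 0, and assume the matrices E*_i·A·E*_j with 0 ≤ i,j ≤ D and |i−j| = 1 are linearly independent. Then W*·A·(W*)^{−1} = C if and only if α*_i = α*_0·(−1)^i·a^{−i}·q^{i(D−i)} for 0 ≤ i ≤ D (equivalently, α*_i/α*_{i−1} = −a^{−1}·q^{D−2i+1} for 1 ≤ i ≤ D). -/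
open Matrix Finset

private lemma aux_up (q a u : ℂ) (hq : q ≠ 0) (ha : a ≠ 0) (hu : u ≠ 0) :
    q * (a*(u * q^2) + a⁻¹*(u⁻¹*(q^2)⁻¹)) - q⁻¹ * (a*u + a⁻¹*u⁻¹)
      = (q^2 - (q^2)⁻¹) * (a * (u*q)) := by
  field_simp
  ring

private lemma aux_down (q a u : ℂ) (hq : q ≠ 0) (ha : a ≠ 0) (hu : u ≠ 0) :
    q * (a*(u * (q^2)⁻¹) + a⁻¹*(u⁻¹*q^2)) - q⁻¹ * (a*u + a⁻¹*u⁻¹)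
      = (q^2 - (q^2)⁻¹) * (a⁻¹ * (u⁻¹*q)) := by
  field_simp
  try rw [div_eq_iff (by simp [hq, ha, hu])]
  try ring

private lemma aux_diag (q t : ℂ) (hq : q ≠ 0) (hqq : q + q⁻¹ ≠ 0) (hqm : q - q⁻¹ ≠ 0) :
    (1 + t / (q + q⁻¹)) - ((q+q⁻¹)*(q-q⁻¹))⁻¹ * (q*t - q⁻¹*t) = 1 := by
  have e1 : q + q⁻¹ = (q*q+1)*q⁻¹ := by field_simp
  have e2 : q - q⁻¹ = (q*q-1)*q⁻¹ := by field_simp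
  have h1 : q*q+1 ≠ 0 := fun h => hqq (by rw [e1, h, zero_mul])
  have h2 : q*q-1 ≠ 0 := fun h => hqm (by rw [e2, h, zero_mul])
  rw [mul_inv, show q*t - q⁻¹*t = (q-q⁻¹)*t by ring]
  rw [mul_assoc, ← mul_assoc (q-q⁻¹)⁻¹, inv_mul_cancel₀ hqm, one_mul, div_eq_inv_mul]
  ring

theorem intertwiner_characterization_Mstar
    {X : Type*} [Fintype X] [DecidableEq X] [Nonempty X]
    (D : ℤ) (hD : 3 ≤ D) (q a : ℂ) (hq : q ≠ 0) (ha : a ≠ 0)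
    (hq1 : q ^ 2 ≠ 1) (hq2 : q ^ 2 ≠ -1)
    (ϑ : ℤ → ℂ)
    (hϑ : ∀ i : ℤ, ϑ i = a * q ^ (2 * i - D) + a⁻¹ * q ^ (D - 2 * i))
    (β : ℂ) (hβ : β = q ^ (2 : ℤ) + q ^ (-2 : ℤ))
    (Estar : ℤ → Matrix X X ℂ)
    (hEssum : ∑ i ∈ Finset.Icc (0 : ℤ) D, Estar i = 1)
    (hEsmul : ∀ i ∈ Finset.Icc (0 : ℤ) D, ∀ j ∈ Finset.Icc (0 : ℤ) D,
      Estar i * Estar j = if i = j then Estar i else 0)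
    (A : Matrix X X ℂ)
    (htriEs : ∀ i ∈ Finset.Icc (0 : ℤ) D, ∀ j ∈ Finset.Icc (0 : ℤ) D,
      1 < |i - j| → Estar i * A * Estar j = 0)
    (B : Matrix X X ℂ)
    (hB : B = ∑ i ∈ Finset.Icc (0 : ℤ) D, ϑ i • Estar i)
    (Z : Matrix X X ℂ)
    (hZEs : ∀ i ∈ Finset.Icc (0 : ℤ) D,
      Z * Estar i = (1 + ϑ i / (q + q⁻¹)) • (Estar i * A * Estar i) ∧
      Estar i * Z = (1 + ϑ i / (q + q⁻¹)) • (Estar i * A * Estar i))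
    (C : Matrix X X ℂ)
    (hC : C = Z - (q ^ (2 : ℤ) - q ^ (-2 : ℤ))⁻¹ • (q • (A * B) - q⁻¹ • (B * A)))
    (αs : ℤ → ℂ) (hαs : ∀ i ∈ Finset.Icc (0 : ℤ) D, αs i ≠ 0)
    (Wstar : Matrix X X ℂ)
    (hWstar : Wstar = ∑ i ∈ Finset.Icc (0 : ℤ) D, αs i • Estar i)
    (hind : LinearIndependent ℂ
      (fun p : {p : ℤ × ℤ // p.1 ∈ Finset.Icc (0 : ℤ) D ∧
          p.2 ∈ Finset.Icc (0 : ℤ) D ∧ |p.1 - p.2| = 1} =>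
        Estar p.val.1 * A * Estar p.val.2)) :
    (Wstar * A * Wstar⁻¹ = C ↔
      ∀ i ∈ Finset.Icc (0 : ℤ) D,
        αs i = αs 0 * (-1 : ℂ) ^ i * a ^ (-i) * q ^ (i * (D - i))) ∧
    ((∀ i ∈ Finset.Icc (0 : ℤ) D,
        αs i = αs 0 * (-1 : ℂ) ^ i * a ^ (-i) * q ^ (i * (D - i))) ↔
      ∀ i : ℤ, 1 ≤ i → i ≤ D →
        αs i / αs (i - 1) = -(a⁻¹ * q ^ (D - 2 * i + 1))) := by
  classical
  have hne1 : (-1 : ℂ) ≠ 0 := by norm_num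
  -- scalar nonvanishing facts
  have hqq : q + q⁻¹ ≠ 0 := by
    intro h
    apply hq2
    have := mul_eq_zero_of_left h q
    field_simp at this
    linear_combination this
  have hqm : q - q⁻¹ ≠ 0 := by
    intro h
    apply hq1
    have := mul_eq_zero_of_left h q
    field_simp at this
    linear_combination this
  have h2 : q ^ (2:ℤ) = q ^ 2 := by norm_cast
  have hm2 : q ^ (-2:ℤ) = (q ^ 2)⁻¹ := by rw [_root_.zpow_neg, h2]
  have hfac : q ^ (2:ℤ) - q ^ (-2:ℤ) = (q+q⁻¹)*(q-q⁻¹) := by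
    rw [h2, hm2]
    field_simp
    ring
  have hqd : q ^ (2:ℤ) - q ^ (-2:ℤ) ≠ 0 := by
    rw [hfac]
    exact mul_ne_zero hqq hqm
  set S := Finset.Icc (0 : ℤ) D with hSdef
  set M : ℤ → ℤ → Matrix X X ℂ := fun i j => Estar i * A * Estar j with hMdef
  set g : ℤ → ℤ → ℂ := fun i j =>
    (if i = j then 1 + ϑ i / (q + q⁻¹) else 0)
      - (q ^ (2:ℤ) - q ^ (-2:ℤ))⁻¹ * (q * ϑ j - q⁻¹ * ϑ i) with hgdef
  -- diagonal value of g
  have hgdiag : ∀ i : ℤ, g i i = 1 := by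
    intro i
    simp only [hgdef, if_pos rfl]
    rw [hfac]
    exact aux_diag q (ϑ i) hq hqq hqm
  -- off-diagonal values of g
  have hgdown : ∀ i : ℤ, g i (i-1) = -(a⁻¹ * q ^ (D - 2*i + 1)) := by
    intro i
    have hne : ¬ (i = i - 1) := by omega
    simp only [hgdef, if_neg hne, zero_sub, neg_inj]
    rw [hϑ, hϑ]
    set u := q ^ (2*i - D) with hu0
    have hu : u ≠ 0 := zpow_ne_zero _ hq
    have e1 : q ^ (2*(i-1) - D) = u * (q^2)⁻¹ := by
      rw [hu0, ← hm2, ← zpow_add₀ hq]; congr 1; ring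
    have e2 : q ^ (D - 2*(i-1)) = u⁻¹ * q^2 := by
      rw [hu0, ← _root_.zpow_neg, ← h2, ← zpow_add₀ hq]; congr 1; ring
    have e3 : q ^ (D - 2*i) = u⁻¹ := by
      rw [hu0, ← _root_.zpow_neg]; congr 1; ring
    have e4 : q ^ (D - 2*i + 1) = u⁻¹ * q := by
      rw [hu0, ← _root_.zpow_neg, show (D - 2*i + 1) = (-(2*i - D)) + 1 by ring,
        zpow_add₀ hq, zpow_one]
    rw [e1, e2, e3, e4, inv_mul_eq_iff_eq_mul₀ hqd, h2, hm2]
    exact aux_down q a u hq ha hu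
  have hgup : ∀ i : ℤ, g i (i+1) = -(a * q ^ (2*i + 1 - D)) := by
    intro i
    have hne : ¬ (i = i + 1) := by omega
    simp only [hgdef, if_neg hne, zero_sub, neg_inj]
    rw [hϑ, hϑ]
    set u := q ^ (2*i - D) with hu0
    have hu : u ≠ 0 := zpow_ne_zero _ hq
    have e1 : q ^ (2*(i+1) - D) = u * q^2 := by
      rw [hu0, ← h2, ← zpow_add₀ hq]; congr 1; ring
    have e2 : q ^ (D - 2*(i+1)) = u⁻¹ * (q^2)⁻¹ := by
      rw [hu0, ← _root_.zpow_neg, ← hm2, ← zpow_add₀ hq]; congr 1; ring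
    have e3 : q ^ (D - 2*i) = u⁻¹ := by
      rw [hu0, ← _root_.zpow_neg]; congr 1; ring
    have e4 : q ^ (2*i + 1 - D) = u * q := by
      rw [hu0, show (2*i + 1 - D) = (2*i - D) + 1 by ring, zpow_add₀ hq, zpow_one]
    rw [e1, e2, e3, e4, inv_mul_eq_iff_eq_mul₀ hqd, h2, hm2]
    exact aux_up q a u hq ha hu
  -- Z as a sum
  have hZ : Z = ∑ i ∈ S, (1 + ϑ i / (q + q⁻¹)) • M i i := by
    calc Z = Z * 1 := (mul_one Z).symm
    _ = Z * ∑ i ∈ S, Estar i := by rw [hEssum]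
    _ = ∑ i ∈ S, Z * Estar i := Finset.mul_sum _ _ _
    _ = _ := Finset.sum_congr rfl fun i hi => (hZEs i hi).1
  -- A*B and B*A as double sums
  have hA' : ∀ j : ℤ, A * Estar j = ∑ i ∈ S, M i j := by
    intro j
    conv_lhs => rw [← one_mul A, ← hEssum]
    rw [Finset.sum_mul, Finset.sum_mul]
  have hA'' : ∀ i : ℤ, Estar i * A = ∑ j ∈ S, M i j := by
    intro i
    conv_lhs => rw [← mul_one (Estar i * A), ← hEssum]
    rw [Finset.mul_sum]
  have hAB : A * B = ∑ i ∈ S, ∑ j ∈ S, ϑ j • M i j := by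
    calc A * B = ∑ j ∈ S, ϑ j • (A * Estar j) := by
          rw [hB, Finset.mul_sum]
          exact Finset.sum_congr rfl fun j _ => mul_smul_comm _ _ _
    _ = ∑ j ∈ S, ∑ i ∈ S, ϑ j • M i j := by
          refine Finset.sum_congr rfl fun j _ => ?_
          rw [hA' j, Finset.smul_sum]
    _ = _ := Finset.sum_comm
  have hBA : B * A = ∑ i ∈ S, ∑ j ∈ S, ϑ i • M i j := by
    calc B * A = ∑ i ∈ S, ϑ i • (Estar i * A) := by
          rw [hB, Finset.sum_mul]
          exact Finset.sum_congr rfl fun i _ => smul_mul_assoc _ _ _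
    _ = _ := by
          refine Finset.sum_congr rfl fun i _ => ?_
          rw [hA'' i, Finset.smul_sum]
  -- helper sum manipulations
  have step : ∀ (f h : ℤ → ℤ → ℂ),
      (∑ i ∈ S, ∑ j ∈ S, f i j • M i j) - (∑ i ∈ S, ∑ j ∈ S, h i j • M i j)
        = ∑ i ∈ S, ∑ j ∈ S, (f i j - h i j) • M i j := by
    intro f h
    rw [← Finset.sum_sub_distrib]
    refine Finset.sum_congr rfl fun i _ => ?_
    rw [← Finset.sum_sub_distrib]
    exact Finset.sum_congr rfl fun j _ => (sub_smul _ _ _).symm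
  have smulstep : ∀ (c : ℂ) (f : ℤ → ℤ → ℂ),
      c • (∑ i ∈ S, ∑ j ∈ S, f i j • M i j)
        = ∑ i ∈ S, ∑ j ∈ S, (c * f i j) • M i j := by
    intro c f
    rw [Finset.smul_sum]
    refine Finset.sum_congr rfl fun i _ => ?_
    rw [Finset.smul_sum]
    exact Finset.sum_congr rfl fun j _ => smul_smul _ _ _
  -- C as a double sum
  have hCsum : C = ∑ i ∈ S, ∑ j ∈ S, g i j • M i j := by
    have hZdouble : (∑ i ∈ S, (1 + ϑ i / (q + q⁻¹)) • M i i)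
        = ∑ i ∈ S, ∑ j ∈ S, (if i = j then 1 + ϑ i / (q + q⁻¹) else 0) • M i j := by
      refine Finset.sum_congr rfl fun i hi => ?_
      have h' : ∀ j : ℤ, (if i = j then 1 + ϑ i / (q + q⁻¹) else 0) • M i j
          = if i = j then (1 + ϑ i / (q + q⁻¹)) • M i j else 0 := by
        intro j
        by_cases h : i = j <;> simp [h]
      rw [Finset.sum_congr rfl fun j _ => h' j, Finset.sum_ite_eq, if_pos hi]
    rw [hC, hZ, hAB, hBA, hZdouble, smulstep q, smulstep q⁻¹, step, smulstep, step]
  -- inverse of Wstar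
  have horth : Wstar * (∑ i ∈ S, (αs i)⁻¹ • Estar i) = 1 := by
    rw [hWstar, Finset.sum_mul_sum]
    have hterm : ∀ i ∈ S, ∀ j ∈ S, (αs i • Estar i) * ((αs j)⁻¹ • Estar j)
        = if i = j then (αs i * (αs j)⁻¹) • Estar i else 0 := by
      intro i hi j hj
      rw [smul_mul_assoc, mul_smul_comm, smul_smul, hEsmul i hi j hj]
      by_cases h : i = j <;> simp [h]
    calc ∑ i ∈ S, ∑ j ∈ S, (αs i • Estar i) * ((αs j)⁻¹ • Estar j)
        = ∑ i ∈ S, ∑ j ∈ S, (if i = j then (αs i * (αs j)⁻¹) • Estar i else 0) :=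
          Finset.sum_congr rfl fun i hi => Finset.sum_congr rfl fun j hj =>
            hterm i hi j hj
    _ = ∑ i ∈ S, Estar i := by
          refine Finset.sum_congr rfl fun i hi => ?_
          rw [Finset.sum_ite_eq, if_pos hi, mul_inv_cancel₀ (hαs i hi), one_smul]
    _ = 1 := hEssum
  have hWinv : Wstar⁻¹ = ∑ i ∈ S, (αs i)⁻¹ • Estar i := inv_eq_right_inv horth
  -- LHS as a double sum
  have hLHS : Wstar * A * Wstar⁻¹ = ∑ i ∈ S, ∑ j ∈ S, (αs i * (αs j)⁻¹) • M i j := by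
    rw [hWinv, hWstar, Finset.sum_mul, Finset.sum_mul_sum]
    refine Finset.sum_congr rfl fun i _ => ?_
    refine Finset.sum_congr rfl fun j _ => ?_
    rw [smul_mul_assoc, smul_mul_assoc, mul_smul_comm, smul_smul]
  -- the key difference formula
  set T : Finset (ℤ × ℤ) := (S ×ˢ S).filter (fun p => |p.1 - p.2| = 1) with hTdef
  have key : Wstar * A * Wstar⁻¹ - C
      = ∑ p ∈ T, (αs p.1 * (αs p.2)⁻¹ - g p.1 p.2) • M p.1 p.2 := by
    rw [hLHS, hCsum, step]
    rw [← Finset.sum_product']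
    refine (Finset.sum_subset (Finset.filter_subset _ _) ?_).symm
    intro p hp hnp
    rw [Finset.mem_product] at hp
    rw [Finset.mem_filter] at hnp
    have hne : ¬ |p.1 - p.2| = 1 := fun h => hnp ⟨Finset.mem_product.2 hp, h⟩
    by_cases hpe : p.1 = p.2
    · have hc : αs p.1 * (αs p.2)⁻¹ - g p.1 p.2 = 0 := by
        rw [hpe, mul_inv_cancel₀ (hαs p.2 hp.2), hgdiag, sub_self]
      rw [hc, zero_smul]
    · have hx : p.1 - p.2 ≠ 0 := sub_ne_zero.2 hpe
      have habs : 1 < |p.1 - p.2| := lt_of_le_of_ne (Int.one_le_abs hx) (Ne.symm hne)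
      have hM0 : M p.1 p.2 = 0 := htriEs p.1 hp.1 p.2 hp.2 habs
      rw [hM0, smul_zero]
  -- main equivalence with the ratio condition
  have hRiff : (Wstar * A * Wstar⁻¹ = C) ↔
      (∀ i : ℤ, 1 ≤ i → i ≤ D →
        αs i / αs (i - 1) = -(a⁻¹ * q ^ (D - 2 * i + 1))) := by
    constructor
    · intro h
      have hsum0 : ∑ p ∈ T, (αs p.1 * (αs p.2)⁻¹ - g p.1 p.2) • M p.1 p.2 = 0 := by
        rw [← key, h, sub_self]
      rw [linearIndependent_iff'] at hind
      have hmem : ∀ p ∈ T, p.1 ∈ S ∧ p.2 ∈ S ∧ |p.1 - p.2| = 1 := by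
        intro p hp
        rw [hTdef, Finset.mem_filter, Finset.mem_product] at hp
        exact ⟨hp.1.1, hp.1.2, hp.2⟩
      have hall : ∀ p ∈ T, αs p.1 * (αs p.2)⁻¹ - g p.1 p.2 = 0 := by
        have hsum' : ∑ x ∈ T.subtype (fun p => p.1 ∈ S ∧ p.2 ∈ S ∧ |p.1 - p.2| = 1),
            (αs x.val.1 * (αs x.val.2)⁻¹ - g x.val.1 x.val.2)
              • (Estar x.val.1 * A * Estar x.val.2) = 0 := by
          rw [Finset.sum_subtype_of_mem
            (fun p => (αs p.1 * (αs p.2)⁻¹ - g p.1 p.2) • (Estar p.1 * A * Estar p.2)) hmem]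
          exact hsum0
        have h2' := hind (T.subtype (fun p => p.1 ∈ S ∧ p.2 ∈ S ∧ |p.1 - p.2| = 1))
          (fun x => αs x.val.1 * (αs x.val.2)⁻¹ - g x.val.1 x.val.2) hsum'
        intro p hp
        exact h2' ⟨p, hmem p hp⟩ (Finset.mem_subtype.2 hp)
      intro i h1 hiD
      have hpmem : ((i, i-1) : ℤ × ℤ) ∈ T := by
        rw [hTdef, Finset.mem_filter, Finset.mem_product]
        refine ⟨⟨?_, ?_⟩, ?_⟩
        · rw [hSdef]; exact Finset.mem_Icc.2 ⟨by omega, by omega⟩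
        · rw [hSdef]; exact Finset.mem_Icc.2 ⟨by omega, by omega⟩
        · simp
      have hd0 := hall _ hpmem
      simp only at hd0
      rw [sub_eq_zero] at hd0
      rw [div_eq_mul_inv, hd0, hgdown]
    · intro hR
      rw [← sub_eq_zero, key]
      refine Finset.sum_eq_zero fun p hp => ?_
      rw [hTdef, Finset.mem_filter, Finset.mem_product] at hp
      obtain ⟨⟨hp1, hp2⟩, habs⟩ := hp
      have hp1' := hp1
      have hp2' := hp2
      rw [hSdef, Finset.mem_Icc] at hp1' hp2'
      rcases (abs_eq (by norm_num : (0:ℤ) ≤ 1)).1 habs with hcase | hcase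
      · -- p.2 = p.1 - 1
        have hj : p.2 = p.1 - 1 := by omega
        have hr := hR p.1 (by omega) (by omega)
        rw [div_eq_mul_inv] at hr
        have hc : αs p.1 * (αs p.2)⁻¹ - g p.1 p.2 = 0 := by
          rw [hj, hgdown, ← hr, sub_self]
        rw [hc, zero_smul]
      · -- p.2 = p.1 + 1
        have hj : p.2 = p.1 + 1 := by omega
        have hr := hR (p.1 + 1) (by omega) (by omega)
        rw [show p.1 + 1 - 1 = p.1 by ring] at hr
        have hα1 : αs p.1 ≠ 0 := hαs p.1 hp1
        rw [div_eq_iff hα1] at hr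
        have hval : αs p.1 * (αs (p.1+1))⁻¹ = -(a * q ^ (2*p.1 + 1 - D)) := by
          rw [hr, mul_inv, inv_neg, mul_inv, inv_inv, ← _root_.zpow_neg,
            show -(D - 2*(p.1+1) + 1) = 2*p.1 + 1 - D by ring]
          field_simp
        have hc : αs p.1 * (αs p.2)⁻¹ - g p.1 p.2 = 0 := by
          rw [hj, hgup, hval, sub_self]
        rw [hc, zero_smul]
  -- second equivalence (scalar recursion)
  have hPR : (∀ i ∈ S, αs i = αs 0 * (-1 : ℂ) ^ i * a ^ (-i) * q ^ (i * (D - i))) ↔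
      (∀ i : ℤ, 1 ≤ i → i ≤ D →
        αs i / αs (i - 1) = -(a⁻¹ * q ^ (D - 2 * i + 1))) := by
    constructor
    · intro hP i h1 hiD
      have h0 : αs (i-1) ≠ 0 := hαs _ (by rw [hSdef]; exact Finset.mem_Icc.2 ⟨by omega, by omega⟩)
      have hPi := hP i (by rw [hSdef]; exact Finset.mem_Icc.2 ⟨by omega, by omega⟩)
      have hPi1 := hP (i-1) (by rw [hSdef]; exact Finset.mem_Icc.2 ⟨by omega, by omega⟩)
      rw [div_eq_iff h0, hPi, hPi1]
      have e1 : (-1:ℂ)^i = (-1:ℂ)^(i-1) * (-1) := by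
        rw [← zpow_add_one₀ hne1]; congr 1; ring
      have e2 : a^(-i) = a^(-(i-1)) * a⁻¹ := by
        rw [← _root_.zpow_neg_one, ← zpow_add₀ ha]; congr 1; ring
      have e3 : q^(i*(D-i)) = q^((i-1)*(D-(i-1))) * q^(D-2*i+1) := by
        rw [← zpow_add₀ hq]; congr 1; ring
      rw [e1, e2, e3]; ring
    · intro hR
      have keyrec : ∀ i : ℤ, 0 ≤ i → i ≤ D →
          αs i = αs 0 * (-1 : ℂ) ^ i * a ^ (-i) * q ^ (i * (D - i)) := by
        intro i hi0
        refine Int.le_induction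
          (motive := fun j _ => j ≤ D → αs j = αs 0 * (-1 : ℂ) ^ j * a ^ (-j) * q ^ (j * (D - j)))
          ?_ ?_ i hi0
        · intro _; simp
        · intro n hn ih hnd1
          have hnD : n ≤ D := by omega
          have ihn := ih hnD
          have h0 : αs n ≠ 0 := hαs _ (by rw [hSdef]; exact Finset.mem_Icc.2 ⟨by omega, by omega⟩)
          have hr := hR (n+1) (by omega) hnd1
          rw [show n+1-1 = n by ring, div_eq_iff h0] at hr
          rw [hr, ihn]
          have e1 : (-1:ℂ)^(n+1) = (-1:ℂ)^n * (-1) := by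
            rw [← zpow_add_one₀ hne1]
          have e2 : a^(-(n+1)) = a^(-n) * a⁻¹ := by
            rw [← _root_.zpow_neg_one, ← zpow_add₀ ha]; congr 1; ring
          have e3 : q^((n+1)*(D-(n+1))) = q^(n*(D-n)) * q^(D-2*(n+1)+1) := by
            rw [← zpow_add₀ hq]; congr 1; ring
          rw [e1, e2, e3]; ring
      intro i hi
      rw [hSdef, Finset.mem_Icc] at hi
      exact keyrec i hi.1 hi.2
  exact ⟨hRiff.trans hPR.symm, hPR⟩
end

section
/- Assume W·A = A·W, W*·B = B·W*, W^{−1}·B·W = C and W*·A·(W*)^{−1} = C. Then conjugation by W*·W sends A ↦ B ↦ C ↦ A; that is, A·(W*·W) = (W*·W)·B, B·(W*·W) = (W*·W)·C, and C·(W*·W) = (W*·W)·A. -/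
open Matrix

theorem conjugation_cycles_ABC {X : Type*} [Fintype X] [DecidableEq X] [Nonempty X]
    (W Wstar A B C : Matrix X X ℂ)
    (hWu : IsUnit W) (hWsu : IsUnit Wstar)
    (hAsymm : A.IsSymm) (hBsymm : B.IsSymm)
    (hWsymm : W.IsSymm) (hWssymm : Wstar.IsSymm)
    (hWA : W * A = A * W) (hWsB : Wstar * B = B * Wstar)
    (hWBW : W⁻¹ * B * W = C) (hWsAWs : Wstar * A * Wstar⁻¹ = C) :
    A * (Wstar * W) = (Wstar * W) * B ∧
    B * (Wstar * W) = (Wstar * W) * C ∧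
    C * (Wstar * W) = (Wstar * W) * A := by
  have hWd := (Matrix.isUnit_iff_isUnit_det W).mp hWu
  have hWsd := (Matrix.isUnit_iff_isUnit_det Wstar).mp hWsu
  have hW1 : W * W⁻¹ = 1 := Matrix.mul_nonsing_inv W hWd
  have hW2 : W⁻¹ * W = 1 := Matrix.nonsing_inv_mul W hWd
  have hWs1 : Wstar * Wstar⁻¹ = 1 := Matrix.mul_nonsing_inv Wstar hWsd
  have hWs2 : Wstar⁻¹ * Wstar = 1 := Matrix.nonsing_inv_mul Wstar hWsd
  -- B * W = W * C
  have hBW : B * W = W * C := by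
    have : W * (W⁻¹ * B * W) = W * C := by rw [hWBW]
    calc B * W = (W * W⁻¹) * B * W := by rw [hW1, one_mul]
      _ = W * (W⁻¹ * B * W) := by noncomm_ring
      _ = W * C := this
  -- Wstar * A = C * Wstar
  have hWsA : Wstar * A = C * Wstar := by
    have : (Wstar * A * Wstar⁻¹) * Wstar = C * Wstar := by rw [hWsAWs]
    calc Wstar * A = Wstar * A * (Wstar⁻¹ * Wstar) := by rw [hWs2, mul_one]
      _ = (Wstar * A * Wstar⁻¹) * Wstar := by noncomm_ring
      _ = C * Wstar := this
  -- key : W * Wstar * A = B * (W * Wstar)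
  have key : W * Wstar * A = B * (W * Wstar) := by
    have h : W * (Wstar * A * Wstar⁻¹) * Wstar = W * (W⁻¹ * B * W) * Wstar := by
      rw [hWsAWs, hWBW]
    calc W * Wstar * A = W * (Wstar * A) * (Wstar⁻¹ * Wstar) := by rw [hWs2, mul_one, mul_assoc]
      _ = W * (Wstar * A * Wstar⁻¹) * Wstar := by noncomm_ring
      _ = W * (W⁻¹ * B * W) * Wstar := h
      _ = (W * W⁻¹) * B * (W * Wstar) := by noncomm_ring
      _ = B * (W * Wstar) := by rw [hW1, one_mul]
  refine ⟨?_, ?_, ?_⟩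
  · -- transpose of key
    have h := congrArg Matrix.transpose key
    simpa [Matrix.transpose_mul, hAsymm.eq, hBsymm.eq, hWsymm.eq, hWssymm.eq, mul_assoc]
      using h
  · calc B * (Wstar * W) = (B * Wstar) * W := by rw [mul_assoc]
      _ = Wstar * (B * W) := by rw [← hWsB, mul_assoc]
      _ = Wstar * (W * C) := by rw [hBW]
      _ = (Wstar * W) * C := by rw [mul_assoc]
  · calc C * (Wstar * W) = (C * Wstar) * W := by rw [mul_assoc]
      _ = Wstar * (A * W) := by rw [← hWsA, mul_assoc]
      _ = Wstar * (W * A) := by rw [hWA]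
      _ = (Wstar * W) * A := by rw [mul_assoc]
end

section
/- For 0 ≤ i ≤ D one has (W*·W)^{−1}·E_i·(W*·W) = E*_i; moreover (W*·W)^{−1}·W·(W*·W) = W*. -/
open Matrix Finset

section Aux

variable {X : Type*} [Fintype X] [DecidableEq X]

lemma aux_proj_mul_sum (s : Finset ℤ) (P : ℤ → Matrix X X ℂ)
    (hP : ∀ i ∈ s, ∀ j ∈ s, P i * P j = if i = j then P i else 0)
    (c : ℤ → ℂ) {i : ℤ} (hi : i ∈ s) :
    P i * (∑ j ∈ s, c j • P j) = c i • P i := by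
  rw [Finset.mul_sum]
  have h : ∀ j ∈ s, P i * (c j • P j) = if i = j then c j • P i else 0 := by
    intro j hj
    rw [mul_smul_comm, hP i hi j hj]
    split <;> simp_all
  rw [Finset.sum_congr rfl h, Finset.sum_ite_eq s i (fun j => c j • P i), if_pos hi]

lemma aux_sum_mul_proj (s : Finset ℤ) (P : ℤ → Matrix X X ℂ)
    (hP : ∀ i ∈ s, ∀ j ∈ s, P i * P j = if i = j then P i else 0)
    (c : ℤ → ℂ) {i : ℤ} (hi : i ∈ s) :
    (∑ j ∈ s, c j • P j) * P i = c i • P i := by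
  rw [Finset.sum_mul]
  have h : ∀ j ∈ s, (c j • P j) * P i = if j = i then c j • P i else 0 := by
    intro j hj
    rw [smul_mul_assoc, hP j hj i hi]
    split <;> simp_all
  rw [Finset.sum_congr rfl h, Finset.sum_ite_eq' s i (fun j => c j • P i), if_pos hi]

lemma aux_sum_mul_sum (s : Finset ℤ) (P : ℤ → Matrix X X ℂ)
    (hP : ∀ i ∈ s, ∀ j ∈ s, P i * P j = if i = j then P i else 0)
    (c d : ℤ → ℂ) :
    (∑ i ∈ s, c i • P i) * (∑ j ∈ s, d j • P j) = ∑ i ∈ s, (c i * d i) • P i := by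
  rw [Finset.sum_mul]
  refine Finset.sum_congr rfl (fun i hi => ?_)
  rw [smul_mul_assoc, aux_proj_mul_sum s P hP d hi, smul_smul]

end Aux

theorem rho_sends_E_to_Estar
    {X : Type*} [Fintype X] [DecidableEq X] [Nonempty X]
    (D : ℤ) (hD : 3 ≤ D)
    (ϑ : ℤ → ℂ)
    (hϑ : ∀ i ∈ Finset.Icc (0 : ℤ) D, ∀ j ∈ Finset.Icc (0 : ℤ) D,
      ϑ i = ϑ j → i = j)
    (f : ℂ) (hf : f ≠ 0)
    (τ : ℤ → ℂ) (hτ : ∀ i ∈ Finset.Icc (0 : ℤ) D, τ i ≠ 0)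
    (E Estar : ℤ → Matrix X X ℂ)
    (hEsymm : ∀ i ∈ Finset.Icc (0 : ℤ) D, (E i).IsSymm)
    (hEssymm : ∀ i ∈ Finset.Icc (0 : ℤ) D, (Estar i).IsSymm)
    (hEsum : ∑ i ∈ Finset.Icc (0 : ℤ) D, E i = 1)
    (hEmul : ∀ i ∈ Finset.Icc (0 : ℤ) D, ∀ j ∈ Finset.Icc (0 : ℤ) D,
      E i * E j = if i = j then E i else 0)
    (hEssum : ∑ i ∈ Finset.Icc (0 : ℤ) D, Estar i = 1)
    (hEsmul : ∀ i ∈ Finset.Icc (0 : ℤ) D, ∀ j ∈ Finset.Icc (0 : ℤ) D,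
      Estar i * Estar j = if i = j then Estar i else 0)
    (A B W Wstar : Matrix X X ℂ)
    (hA : A = ∑ i ∈ Finset.Icc (0 : ℤ) D, ϑ i • E i)
    (hB : B = ∑ i ∈ Finset.Icc (0 : ℤ) D, ϑ i • Estar i)
    (hW : W = f • ∑ i ∈ Finset.Icc (0 : ℤ) D, τ i • E i)
    (hWstar : Wstar = f • ∑ i ∈ Finset.Icc (0 : ℤ) D, τ i • Estar i)
    (hint : W⁻¹ * B * W = Wstar * A * Wstar⁻¹)
    :
    (∀ i ∈ Finset.Icc (0 : ℤ) D,
      (Wstar * W)⁻¹ * E i * (Wstar * W) = Estar i) ∧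
    (Wstar * W)⁻¹ * W * (Wstar * W) = Wstar := by
  set s : Finset ℤ := Finset.Icc (0 : ℤ) D with hs
  -- right inverses of W and Wstar
  have hWWi : W * (f⁻¹ • ∑ i ∈ s, (τ i)⁻¹ • E i) = 1 := by
    rw [hW, Matrix.smul_mul, Matrix.mul_smul, smul_smul, mul_inv_cancel₀ hf, one_smul,
      aux_sum_mul_sum s E hEmul, ← hEsum]
    exact Finset.sum_congr rfl fun i hi => by rw [mul_inv_cancel₀ (hτ i hi), one_smul]
  have hWsWsi : Wstar * (f⁻¹ • ∑ i ∈ s, (τ i)⁻¹ • Estar i) = 1 := by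
    rw [hWstar, Matrix.smul_mul, Matrix.mul_smul, smul_smul, mul_inv_cancel₀ hf, one_smul,
      aux_sum_mul_sum s Estar hEsmul, ← hEssum]
    exact Finset.sum_congr rfl fun i hi => by rw [mul_inv_cancel₀ (hτ i hi), one_smul]
  have hWr : W * W⁻¹ = 1 := by rw [Matrix.inv_eq_right_inv hWWi]; exact hWWi
  have hWl : W⁻¹ * W = 1 := mul_eq_one_comm.mp hWr
  have hWsr : Wstar * Wstar⁻¹ = 1 := by rw [Matrix.inv_eq_right_inv hWsWsi]; exact hWsWsi
  have hWsl : Wstar⁻¹ * Wstar = 1 := mul_eq_one_comm.mp hWsr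
  -- symmetry
  have hWs : Wᵀ = W := by
    rw [hW, Matrix.transpose_smul, Matrix.transpose_sum]
    congr 1
    exact Finset.sum_congr rfl fun i hi => by rw [Matrix.transpose_smul, hEsymm i hi]
  have hWss : Wstarᵀ = Wstar := by
    rw [hWstar, Matrix.transpose_smul, Matrix.transpose_sum]
    congr 1
    exact Finset.sum_congr rfl fun i hi => by rw [Matrix.transpose_smul, hEssymm i hi]
  have hAs : Aᵀ = A := by
    rw [hA, Matrix.transpose_sum]
    exact Finset.sum_congr rfl fun i hi => by rw [Matrix.transpose_smul, hEsymm i hi]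
  have hBs : Bᵀ = B := by
    rw [hB, Matrix.transpose_sum]
    exact Finset.sum_congr rfl fun i hi => by rw [Matrix.transpose_smul, hEssymm i hi]
  -- B (W Wstar) = (W Wstar) A
  have h1 : B * W * Wstar = W * Wstar * A := by
    calc B * W * Wstar = W * (W⁻¹ * B * W) * Wstar := by
          simp only [← mul_assoc]; rw [hWr, one_mul]
      _ = W * (Wstar * A * Wstar⁻¹) * Wstar := by rw [hint]
      _ = W * Wstar * A := by
          simp only [← mul_assoc]
          rw [mul_assoc (W * Wstar * A) Wstar⁻¹ Wstar, hWsl, mul_one]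
  -- transpose: A (Wstar W) = (Wstar W) B
  have h2 : A * (Wstar * W) = (Wstar * W) * B := by
    have h := congrArg Matrix.transpose h1
    simp only [Matrix.transpose_mul, hAs, hBs, hWs, hWss] at h
    rw [← mul_assoc] at h
    rw [← h, mul_assoc]
  -- off-diagonal vanishing
  have hzero : ∀ i ∈ s, ∀ j ∈ s, i ≠ j → E i * (Wstar * W) * Estar j = 0 := by
    intro i hi j hj hij
    have eA : E i * A = ϑ i • E i := by rw [hA]; exact aux_proj_mul_sum s E hEmul ϑ hi
    have eB : B * Estar j = ϑ j • Estar j := by rw [hB]; exact aux_sum_mul_proj s Estar hEsmul ϑ hj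
    have key : ϑ i • (E i * (Wstar * W) * Estar j) = ϑ j • (E i * (Wstar * W) * Estar j) := by
      calc ϑ i • (E i * (Wstar * W) * Estar j)
          = (ϑ i • E i) * (Wstar * W) * Estar j := by
            rw [Matrix.smul_mul, Matrix.smul_mul]
        _ = E i * A * (Wstar * W) * Estar j := by rw [eA]
        _ = E i * ((Wstar * W) * B) * Estar j := by
            rw [mul_assoc (E i) A (Wstar * W), h2]
        _ = E i * (Wstar * W) * (B * Estar j) := by
            simp only [mul_assoc]
        _ = ϑ j • (E i * (Wstar * W) * Estar j) := by
            rw [eB, mul_smul_comm]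
    have hsub : (ϑ i - ϑ j) • (E i * (Wstar * W) * Estar j) = 0 := by
      rw [sub_smul, key, sub_self]
    have hne : ϑ i - ϑ j ≠ 0 := sub_ne_zero.mpr (fun h => hij (hϑ i hi j hj h))
    rcases smul_eq_zero.mp hsub with h | h
    · exact absurd h hne
    · exact h
  -- E i Ψ = Ψ Estar i
  have hcomm : ∀ i ∈ s, E i * (Wstar * W) = (Wstar * W) * Estar i := by
    intro i hi
    have l1 : E i * (Wstar * W) = E i * (Wstar * W) * Estar i := by
      conv_lhs => rw [← mul_one (E i * (Wstar * W)), ← hEssum]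
      rw [Finset.mul_sum]
      exact Finset.sum_eq_single_of_mem i hi fun j hj hji =>
        hzero i hi j hj (Ne.symm hji)
    have l2 : (Wstar * W) * Estar i = E i * (Wstar * W) * Estar i := by
      conv_lhs => rw [← one_mul ((Wstar * W) * Estar i), ← hEsum]
      rw [Finset.sum_mul]
      rw [Finset.sum_eq_single_of_mem i hi fun j hj hji => by
        rw [← mul_assoc]; exact hzero j hj i hi hji]
      simp only [← mul_assoc]
    rw [l1, l2]
  -- invertibility of Ψ = Wstar * W
  have hPsir : (Wstar * W) * (W⁻¹ * Wstar⁻¹) = 1 := by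
    calc Wstar * W * (W⁻¹ * Wstar⁻¹) = Wstar * (W * W⁻¹) * Wstar⁻¹ := by
          simp only [mul_assoc]
      _ = 1 := by rw [hWr, mul_one, hWsr]
  have hPsil : (Wstar * W)⁻¹ * (Wstar * W) = 1 := by
    rw [Matrix.inv_eq_right_inv hPsir]
    exact mul_eq_one_comm.mp hPsir
  constructor
  · intro i hi
    rw [mul_assoc, hcomm i hi, ← mul_assoc, hPsil, one_mul]
  · have hWΨ : W * (Wstar * W) = (Wstar * W) * Wstar := by
      nth_rewrite 1 [hW]
      nth_rewrite 3 [hWstar]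
      rw [Matrix.smul_mul, Matrix.mul_smul]
      congr 1
      rw [Finset.sum_mul, Finset.mul_sum]
      refine Finset.sum_congr rfl fun i hi => ?_
      rw [smul_mul_assoc, mul_smul_comm, hcomm i hi]
    rw [mul_assoc, hWΨ, ← mul_assoc, hPsil, one_mul]
end

section
/- For 0 ≤ i ≤ D the following conjugation identities hold: W·E*_i·W^{−1} = (W*)^{−1}·E_i·W* and W^{−1}·E*_i·W = W*·E_i·(W*)^{−1}. -/
open Matrix Finset

private lemma aux_sum_smul_mul {X : Type*} [Fintype X] [DecidableEq X]
    (S : Finset ℤ) (E : ℤ → Matrix X X ℂ)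
    (hEsum : ∑ i ∈ S, E i = 1)
    (hEmul : ∀ i ∈ S, ∀ j ∈ S, E i * E j = if i = j then E i else 0)
    (c d : ℤ → ℂ) (h : ∀ i ∈ S, c i * d i = 1) :
    (∑ i ∈ S, c i • E i) * (∑ i ∈ S, d i • E i) = 1 := by
  rw [Finset.sum_mul]
  have h1 : ∀ i ∈ S, (c i • E i) * ∑ j ∈ S, d j • E j = E i := by
    intro i hi
    rw [Finset.mul_sum]
    have h2 : ∀ j ∈ S, (c i • E i) * (d j • E j) = if i = j then (c i * d j) • E i else 0 := by
      intro j hj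
      rw [smul_mul_assoc, mul_smul_comm, smul_smul, hEmul i hi j hj]
      split <;> simp
    rw [Finset.sum_congr rfl h2, Finset.sum_ite_eq S i, if_pos hi, h i hi, one_smul]
  rw [Finset.sum_congr rfl h1, hEsum]

private lemma aux_proj {X : Type*} [Fintype X] [DecidableEq X]
    (S : Finset ℤ) (E : ℤ → Matrix X X ℂ)
    (hEmul : ∀ i ∈ S, ∀ j ∈ S, E i * E j = if i = j then E i else 0)
    (c : ℤ → ℂ) (i : ℤ) (hi : i ∈ S) :
    E i * (∑ j ∈ S, c j • E j) = c i • E i := by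
  rw [Finset.mul_sum]
  have h2 : ∀ j ∈ S, E i * (c j • E j) = if i = j then c j • E i else 0 := by
    intro j hj
    rw [mul_smul_comm, hEmul i hi j hj]
    split <;> simp
  rw [Finset.sum_congr rfl h2, Finset.sum_ite_eq S i, if_pos hi]

private lemma aux_proj' {X : Type*} [Fintype X] [DecidableEq X]
    (S : Finset ℤ) (E : ℤ → Matrix X X ℂ)
    (hEmul : ∀ i ∈ S, ∀ j ∈ S, E i * E j = if i = j then E i else 0)
    (c : ℤ → ℂ) (i : ℤ) (hi : i ∈ S) :
    (∑ j ∈ S, c j • E j) * E i = c i • E i := by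
  rw [Finset.sum_mul]
  have h2 : ∀ j ∈ S, (c j • E j) * E i = if j = i then c j • E i else 0 := by
    intro j hj
    rw [smul_mul_assoc, hEmul j hj i hi]
    split <;> simp_all
  rw [Finset.sum_congr rfl h2, Finset.sum_ite_eq' S i, if_pos hi]

theorem conjugation_identities_WWstar
    {X : Type*} [Fintype X] [DecidableEq X] [Nonempty X]
    (D : ℤ) (hD : 3 ≤ D)
    (ϑ : ℤ → ℂ)
    (hϑ : ∀ i ∈ Finset.Icc (0 : ℤ) D, ∀ j ∈ Finset.Icc (0 : ℤ) D,
      ϑ i = ϑ j → i = j)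
    (f : ℂ) (hf : f ≠ 0)
    (τ : ℤ → ℂ) (hτ : ∀ i ∈ Finset.Icc (0 : ℤ) D, τ i ≠ 0)
    (E Estar : ℤ → Matrix X X ℂ)
    (hEsymm : ∀ i ∈ Finset.Icc (0 : ℤ) D, (E i).IsSymm)
    (hEssymm : ∀ i ∈ Finset.Icc (0 : ℤ) D, (Estar i).IsSymm)
    (hEsum : ∑ i ∈ Finset.Icc (0 : ℤ) D, E i = 1)
    (hEmul : ∀ i ∈ Finset.Icc (0 : ℤ) D, ∀ j ∈ Finset.Icc (0 : ℤ) D,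
      E i * E j = if i = j then E i else 0)
    (hEssum : ∑ i ∈ Finset.Icc (0 : ℤ) D, Estar i = 1)
    (hEsmul : ∀ i ∈ Finset.Icc (0 : ℤ) D, ∀ j ∈ Finset.Icc (0 : ℤ) D,
      Estar i * Estar j = if i = j then Estar i else 0)
    (A B W Wstar : Matrix X X ℂ)
    (hA : A = ∑ i ∈ Finset.Icc (0 : ℤ) D, ϑ i • E i)
    (hB : B = ∑ i ∈ Finset.Icc (0 : ℤ) D, ϑ i • Estar i)
    (hW : W = f • ∑ i ∈ Finset.Icc (0 : ℤ) D, τ i • E i)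
    (hWstar : Wstar = f • ∑ i ∈ Finset.Icc (0 : ℤ) D, τ i • Estar i)
    (hint : W⁻¹ * B * W = Wstar * A * Wstar⁻¹)
    :
    ∀ i ∈ Finset.Icc (0 : ℤ) D,
      W * Estar i * W⁻¹ = Wstar⁻¹ * E i * Wstar ∧
      W⁻¹ * Estar i * W = Wstar * E i * Wstar⁻¹ := by
  set S := Finset.Icc (0 : ℤ) D with hS
  -- rewrite W, Wstar as single sums
  have hW' : W = ∑ i ∈ S, (f * τ i) • E i := by
    rw [hW, Finset.smul_sum]
    exact Finset.sum_congr rfl fun i _ => smul_smul f (τ i) (E i)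
  have hWs' : Wstar = ∑ i ∈ S, (f * τ i) • Estar i := by
    rw [hWstar, Finset.smul_sum]
    exact Finset.sum_congr rfl fun i _ => smul_smul f (τ i) (Estar i)
  have hcd : ∀ i ∈ S, (f * τ i) * (f⁻¹ * (τ i)⁻¹) = 1 := by
    intro i hi
    field_simp
    exact div_self (hτ i hi)
  have hdc : ∀ i ∈ S, (f⁻¹ * (τ i)⁻¹) * (f * τ i) = 1 := by
    intro i hi
    field_simp
    exact div_self (hτ i hi)
  set V : Matrix X X ℂ := ∑ i ∈ S, (f⁻¹ * (τ i)⁻¹) • E i with hV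
  set Vs : Matrix X X ℂ := ∑ i ∈ S, (f⁻¹ * (τ i)⁻¹) • Estar i with hVs
  have hWV : W * V = 1 := by
    rw [hW']; exact aux_sum_smul_mul S E hEsum hEmul _ _ hcd
  have hVW : V * W = 1 := by
    rw [hW']; exact aux_sum_smul_mul S E hEsum hEmul _ _ hdc
  have hWsVs : Wstar * Vs = 1 := by
    rw [hWs']; exact aux_sum_smul_mul S Estar hEssum hEsmul _ _ hcd
  have hVsWs : Vs * Wstar = 1 := by
    rw [hWs']; exact aux_sum_smul_mul S Estar hEssum hEsmul _ _ hdc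
  have hWinv : W⁻¹ = V := Matrix.inv_eq_right_inv hWV
  have hWsinv : Wstar⁻¹ = Vs := Matrix.inv_eq_right_inv hWsVs
  have hWWi : W * W⁻¹ = 1 := by rw [hWinv]; exact hWV
  have hWiW : W⁻¹ * W = 1 := by rw [hWinv]; exact hVW
  have hWsWsi : Wstar * Wstar⁻¹ = 1 := by rw [hWsinv]; exact hWsVs
  have hWsiWs : Wstar⁻¹ * Wstar = 1 := by rw [hWsinv]; exact hVsWs
  set M : Matrix X X ℂ := W * Wstar with hM
  -- key intertwining: B * M = M * A
  have hBM : B * M = M * A := by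
    have h1 := congrArg (fun Z => W * Z * Wstar) hint
    simp only [← mul_assoc] at h1
    rw [hWWi, one_mul, mul_assoc (W * Wstar * A) Wstar⁻¹ Wstar, hWsiWs, mul_one] at h1
    rw [hM]
    simp only [← mul_assoc]
    exact h1
  have hprojB : ∀ i ∈ S, Estar i * B = ϑ i • Estar i := by
    intro i hi; rw [hB]; exact aux_proj S Estar hEsmul ϑ i hi
  have hprojA : ∀ j ∈ S, A * E j = ϑ j • E j := by
    intro j hj; rw [hA]; exact aux_proj' S E hEmul ϑ j hj
  -- off-diagonal blocks vanish
  have hzero : ∀ i ∈ S, ∀ j ∈ S, i ≠ j → Estar i * M * E j = 0 := by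
    intro i hi j hj hij
    have l : Estar i * (B * M) * E j = ϑ i • (Estar i * M * E j) := by
      rw [← mul_assoc (Estar i) B M, hprojB i hi, smul_mul_assoc, smul_mul_assoc]
    have r : Estar i * (M * A) * E j = ϑ j • (Estar i * M * E j) := by
      rw [← mul_assoc (Estar i) M A, mul_assoc (Estar i * M) A (E j), hprojA j hj,
        mul_smul_comm]
    have e1 : (ϑ i - ϑ j) • (Estar i * M * E j) = 0 := by
      rw [sub_smul, ← l, ← r, hBM, sub_self]
    have hne : ϑ i - ϑ j ≠ 0 := sub_ne_zero.mpr fun h => hij (hϑ i hi j hj h)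
    rcases smul_eq_zero.mp e1 with h | h
    · exact absurd h hne
    · exact h
  -- Estar i * M = M * E i
  have hcomm : ∀ i ∈ S, Estar i * M = M * E i := by
    intro i hi
    have l : Estar i * M = Estar i * M * E i := by
      conv_lhs => rw [← mul_one (Estar i * M), ← hEsum, Finset.mul_sum]
      exact Finset.sum_eq_single_of_mem i hi fun j hj hji =>
        hzero i hi j hj (fun h => hji h.symm)
    have r : M * E i = Estar i * M * E i := by
      conv_lhs => rw [← one_mul (M * E i), ← hEssum, Finset.sum_mul]
      refine (Finset.sum_eq_single_of_mem i hi fun j hj hji => ?_).trans (mul_assoc _ _ _).symm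
      rw [← mul_assoc]
      exact hzero j hj i hi hji
    rw [l, r]
  -- symmetry of W and Wstar
  have hWsym : Wᵀ = W := by
    rw [hW, Matrix.transpose_smul, Matrix.transpose_sum]
    congr 1
    exact Finset.sum_congr rfl fun i hi => by rw [Matrix.transpose_smul, hEsymm i hi]
  have hWssym : Wstarᵀ = Wstar := by
    rw [hWstar, Matrix.transpose_smul, Matrix.transpose_sum]
    congr 1
    exact Finset.sum_congr rfl fun i hi => by rw [Matrix.transpose_smul, hEssymm i hi]
  -- transposed commutation: (Wstar * W) * Estar i = E i * (Wstar * W)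
  have hcomm' : ∀ i ∈ S, (Wstar * W) * Estar i = E i * (Wstar * W) := by
    intro i hi
    have h := congrArg Matrix.transpose (hcomm i hi)
    rw [hM] at h
    simp only [Matrix.transpose_mul, hWsym, hWssym, (hEsymm i hi).eq, (hEssymm i hi).eq] at h
    simp only [← mul_assoc] at h ⊢
    exact h
  intro i hi
  constructor
  · -- W * Estar i * W⁻¹ = Wstar⁻¹ * E i * Wstar
    have h := congrArg (fun Z => Wstar⁻¹ * Z * W⁻¹) (hcomm' i hi)
    simp only [← mul_assoc] at h
    rw [hWsiWs, one_mul, mul_assoc (Wstar⁻¹ * (E i) * Wstar) W W⁻¹, hWWi, mul_one] at h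
    rw [h]
  · -- W⁻¹ * Estar i * W = Wstar * E i * Wstar⁻¹
    have h := congrArg (fun Z => W⁻¹ * Z * Wstar⁻¹) (hcomm i hi)
    rw [hM] at h
    simp only [← mul_assoc] at h
    rw [hWiW, one_mul] at h
    rw [mul_assoc (W⁻¹ * Estar i * W) Wstar Wstar⁻¹, hWsWsi, mul_one] at h
    exact h
end

section
/- The braid relation holds: W·W*·W = W*·W·W*. -/
open Matrix Finset

theorem braid_relation_WWstar
    {X : Type*} [Fintype X] [DecidableEq X] [Nonempty X]
    (D : ℤ) (hD : 3 ≤ D)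
    (ϑ : ℤ → ℂ)
    (hϑ : ∀ i ∈ Finset.Icc (0 : ℤ) D, ∀ j ∈ Finset.Icc (0 : ℤ) D,
      ϑ i = ϑ j → i = j)
    (f : ℂ) (hf : f ≠ 0)
    (τ : ℤ → ℂ) (hτ : ∀ i ∈ Finset.Icc (0 : ℤ) D, τ i ≠ 0)
    (E Estar : ℤ → Matrix X X ℂ)
    (hEsymm : ∀ i ∈ Finset.Icc (0 : ℤ) D, (E i).IsSymm)
    (hEssymm : ∀ i ∈ Finset.Icc (0 : ℤ) D, (Estar i).IsSymm)
    (hEsum : ∑ i ∈ Finset.Icc (0 : ℤ) D, E i = 1)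
    (hEmul : ∀ i ∈ Finset.Icc (0 : ℤ) D, ∀ j ∈ Finset.Icc (0 : ℤ) D,
      E i * E j = if i = j then E i else 0)
    (hEssum : ∑ i ∈ Finset.Icc (0 : ℤ) D, Estar i = 1)
    (hEsmul : ∀ i ∈ Finset.Icc (0 : ℤ) D, ∀ j ∈ Finset.Icc (0 : ℤ) D,
      Estar i * Estar j = if i = j then Estar i else 0)
    (A B W Wstar : Matrix X X ℂ)
    (hA : A = ∑ i ∈ Finset.Icc (0 : ℤ) D, ϑ i • E i)
    (hB : B = ∑ i ∈ Finset.Icc (0 : ℤ) D, ϑ i • Estar i)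
    (hW : W = f • ∑ i ∈ Finset.Icc (0 : ℤ) D, τ i • E i)
    (hWstar : Wstar = f • ∑ i ∈ Finset.Icc (0 : ℤ) D, τ i • Estar i)
    (hint : W⁻¹ * B * W = Wstar * A * Wstar⁻¹)
    :
    W * Wstar * W = Wstar * W * Wstar := by
  set s := Finset.Icc (0 : ℤ) D with hs
  -- collapsing lemma for orthogonal idempotents
  have collapse : ∀ (F : ℤ → Matrix X X ℂ),
      (∀ i ∈ s, ∀ j ∈ s, F i * F j = if i = j then F i else 0) →
      ∀ (a b : ℤ → ℂ),
      (∑ i ∈ s, a i • F i) * (∑ j ∈ s, b j • F j) = ∑ i ∈ s, (a i * b i) • F i := by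
    intro F hF a b
    rw [Finset.sum_mul]
    refine Finset.sum_congr rfl fun i hi => ?_
    rw [Finset.mul_sum, Finset.sum_eq_single_of_mem i hi]
    · rw [smul_mul_assoc, mul_smul_comm, hF i hi i hi, if_pos rfl, smul_smul, mul_comm (a i)]
    · intro j hj hji
      rw [smul_mul_assoc, mul_smul_comm, hF i hi j hj, if_neg (fun h => hji h.symm),
        smul_zero, smul_zero]
  -- explicit inverses
  set W' : Matrix X X ℂ := f⁻¹ • ∑ i ∈ s, (τ i)⁻¹ • E i with hW'
  set Ws' : Matrix X X ℂ := f⁻¹ • ∑ i ∈ s, (τ i)⁻¹ • Estar i with hWs'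
  have hone : ∀ (F : ℤ → Matrix X X ℂ), (∑ i ∈ s, F i = 1) →
      (∀ i ∈ s, ∀ j ∈ s, F i * F j = if i = j then F i else 0) →
      (f • ∑ i ∈ s, τ i • F i) * (f⁻¹ • ∑ i ∈ s, (τ i)⁻¹ • F i) = 1 ∧
      (f⁻¹ • ∑ i ∈ s, (τ i)⁻¹ • F i) * (f • ∑ i ∈ s, τ i • F i) = 1 := by
    intro F hFsum hF
    constructor
    · rw [smul_mul_assoc, mul_smul_comm, collapse F hF, smul_smul,
        mul_inv_cancel₀ hf]
      rw [show (∑ i ∈ s, (τ i * (τ i)⁻¹) • F i) = ∑ i ∈ s, F i from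
        Finset.sum_congr rfl fun i hi => by rw [mul_inv_cancel₀ (hτ i hi), one_smul],
        hFsum, one_smul]
    · rw [smul_mul_assoc, mul_smul_comm, collapse F hF, smul_smul,
        inv_mul_cancel₀ hf]
      rw [show (∑ i ∈ s, ((τ i)⁻¹ * τ i) • F i) = ∑ i ∈ s, F i from
        Finset.sum_congr rfl fun i hi => by rw [inv_mul_cancel₀ (hτ i hi), one_smul],
        hFsum, one_smul]
  obtain ⟨hWr, hWl⟩ := hone E hEsum hEmul
  obtain ⟨hWsr, hWsl⟩ := hone Estar hEssum hEsmul
  rw [← hW, ← hW'] at hWr hWl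
  rw [← hWstar, ← hWs'] at hWsr hWsl
  have hWinv : W⁻¹ = W' := Matrix.inv_eq_right_inv hWr
  have hWsinv : Wstar⁻¹ = Ws' := Matrix.inv_eq_right_inv hWsr
  -- the intertwining relation in commuting form
  set M : Matrix X X ℂ := W * Wstar with hM
  have hBM : B * M = M * A := by
    rw [hWinv, hWsinv] at hint
    have h := congrArg (fun N => W * N * Wstar) hint
    simp only [← mul_assoc] at h
    rw [hWr, one_mul, mul_assoc (W * Wstar * A) Ws' Wstar, hWsl, mul_one] at h
    rw [hM, ← mul_assoc, h]
  -- eigen-relations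
  have hEB : ∀ j ∈ s, Estar j * B = ϑ j • Estar j := by
    intro j hj
    rw [hB, Finset.mul_sum, Finset.sum_eq_single_of_mem j hj]
    · rw [mul_smul_comm, hEsmul j hj j hj, if_pos rfl]
    · intro k hk hkj
      rw [mul_smul_comm, hEsmul j hj k hk, if_neg (fun h => hkj h.symm), smul_zero]
  have hAE : ∀ i ∈ s, A * E i = ϑ i • E i := by
    intro i hi
    rw [hA, Finset.sum_mul, Finset.sum_eq_single_of_mem i hi]
    · rw [smul_mul_assoc, hEmul i hi i hi, if_pos rfl]
    · intro k hk hki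
      rw [smul_mul_assoc, hEmul k hk i hi, if_neg hki, smul_zero]
  -- off-diagonal components vanish
  have key : ∀ i ∈ s, ∀ j ∈ s, i ≠ j → Estar j * M * E i = 0 := by
    intro i hi j hj hij
    have h1 : Estar j * (B * M) * E i = ϑ j • (Estar j * M * E i) := by
      rw [← mul_assoc, hEB j hj, smul_mul_assoc, smul_mul_assoc]
    have h2 : Estar j * (M * A) * E i = ϑ i • (Estar j * M * E i) := by
      rw [mul_assoc, mul_assoc, hAE i hi, mul_smul_comm, mul_smul_comm, ← mul_assoc]
    rw [hBM, h2] at h1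
    have hne : ϑ j - ϑ i ≠ 0 := by
      intro h
      exact (fun h' => hij h'.symm) (hϑ j hj i hi (by linear_combination h))
    have := sub_eq_zero.mpr h1.symm
    rw [← sub_smul] at this
    exact (smul_eq_zero.mp this).resolve_left hne
  -- diagonal decomposition of M
  have hMdec : M = ∑ i ∈ s, Estar i * M * E i := by
    calc M = (∑ j ∈ s, Estar j) * M * (∑ i ∈ s, E i) := by
            rw [hEsum, hEssum, one_mul, mul_one]
    _ = ∑ j ∈ s, ∑ i ∈ s, Estar j * M * E i := by
            simp only [Finset.sum_mul, Finset.mul_sum]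
            exact Finset.sum_comm
    _ = ∑ i ∈ s, Estar i * M * E i := by
            refine Finset.sum_congr rfl fun j hj => ?_
            exact Finset.sum_eq_single_of_mem j hj (fun i hi hij => key i hi j hj hij)
  -- Wstar * M = M * W
  have main : Wstar * M = M * W := by
    calc Wstar * M = (f • ∑ j ∈ s, τ j • Estar j) * ∑ i ∈ s, Estar i * M * E i := by
          rw [← hWstar, ← hMdec]
    _ = f • ∑ i ∈ s, τ i • (Estar i * M * E i) := by
          rw [smul_mul_assoc, Finset.sum_mul]
          congr 1
          refine Finset.sum_congr rfl fun j hj => ?_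
          rw [Finset.mul_sum]
          refine (Finset.sum_eq_single_of_mem j hj ?_).trans ?_
          · intro i hi hij
            rw [smul_mul_assoc]
            simp only [← mul_assoc]
            rw [hEsmul j hj i hi, if_neg (fun h => hij h.symm), zero_mul, zero_mul,
              smul_zero]
          · rw [smul_mul_assoc]
            simp only [← mul_assoc]
            rw [hEsmul j hj j hj, if_pos rfl]
    _ = (∑ i ∈ s, Estar i * M * E i) * (f • ∑ j ∈ s, τ j • E j) := by
          rw [mul_smul_comm, Finset.mul_sum]
          congr 1
          refine Finset.sum_congr rfl fun i hi => ?_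
          rw [Finset.sum_mul]
          refine ((Finset.sum_eq_single_of_mem i hi ?_).trans ?_).symm
          · intro j hj hji
            rw [mul_smul_comm]
            simp only [mul_assoc]
            rw [hEmul j hj i hi, if_neg hji, mul_zero, mul_zero, smul_zero]
          · rw [mul_smul_comm]
            simp only [mul_assoc]
            rw [hEmul i hi i hi, if_pos rfl]
    _ = M * W := by rw [← hW, ← hMdec]
  calc W * Wstar * W = M * W := by rw [hM]
  _ = Wstar * M := main.symm
  _ = Wstar * W * Wstar := by rw [hM, ← mul_assoc]
end

section
/- For 0 ≤ i ≤ D (with the conventions E*_{−1} = 0 and E*_{D+1} = 0) the following linear relation holds: (2ϑ_i − β·ϑ_{i−1})·E*_i·A·E*_{i−1}·A·E*_i + (q − q^{−1})(q² − q^{−2})·E*_i·A·E*_i·A·E*_i + (2ϑ_i − β·ϑ_{i+1})·E*_i·A·E*_{i+1}·A·E*_i − (q − q^{−1})(q² − q^{−2})(q + q^{−1} + ϑ_i)·E*_i·A·E*_i + (q² − q^{−2})²·ϑ_i·E*_i = 0. -/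
open Matrix Finset

set_option maxHeartbeats 1600000 in
theorem linear_relation_from_Z
    {X : Type*} [Fintype X] [DecidableEq X] [Nonempty X]
    (D : ℤ) (hD : 3 ≤ D) (q a : ℂ) (hq : q ≠ 0) (ha : a ≠ 0)
    (hq1 : q ^ 2 ≠ 1) (hq2 : q ^ 2 ≠ -1)
    (ϑ : ℤ → ℂ)
    (hϑ : ∀ i : ℤ, ϑ i = a * q ^ (2 * i - D) + a⁻¹ * q ^ (D - 2 * i))
    (β : ℂ) (hβ : β = q ^ (2 : ℤ) + q ^ (-2 : ℤ))
    (E Estar : ℤ → Matrix X X ℂ)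
    (hEsum : ∑ i ∈ Finset.Icc (0 : ℤ) D, E i = 1)
    (hEmul : ∀ i ∈ Finset.Icc (0 : ℤ) D, ∀ j ∈ Finset.Icc (0 : ℤ) D,
      E i * E j = if i = j then E i else 0)
    (hEssum : ∑ i ∈ Finset.Icc (0 : ℤ) D, Estar i = 1)
    (hEsmul : ∀ i ∈ Finset.Icc (0 : ℤ) D, ∀ j ∈ Finset.Icc (0 : ℤ) D,
      Estar i * Estar j = if i = j then Estar i else 0)
    (A B : Matrix X X ℂ)
    (hA : A = ∑ i ∈ Finset.Icc (0 : ℤ) D, ϑ i • E i)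
    (hB : B = ∑ i ∈ Finset.Icc (0 : ℤ) D, ϑ i • Estar i)
    (htriE : ∀ i ∈ Finset.Icc (0 : ℤ) D, ∀ j ∈ Finset.Icc (0 : ℤ) D,
      1 < |i - j| → E i * B * E j = 0)
    (htriEs : ∀ i ∈ Finset.Icc (0 : ℤ) D, ∀ j ∈ Finset.Icc (0 : ℤ) D,
      1 < |i - j| → Estar i * A * Estar j = 0)
    (Z : Matrix X X ℂ)
    (hZE : ∀ i ∈ Finset.Icc (0 : ℤ) D,
      Z * E i = (1 + ϑ i / (q + q⁻¹)) • (E i * B * E i) ∧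
      E i * Z = (1 + ϑ i / (q + q⁻¹)) • (E i * B * E i))
    (hZEs : ∀ i ∈ Finset.Icc (0 : ℤ) D,
      Z * Estar i = (1 + ϑ i / (q + q⁻¹)) • (Estar i * A * Estar i) ∧
      Estar i * Z = (1 + ϑ i / (q + q⁻¹)) • (Estar i * A * Estar i))
    (hEneg : Estar (-1) = 0) (hEtop : Estar (D + 1) = 0) :
    ∀ i ∈ Finset.Icc (0 : ℤ) D,
      (2 * ϑ i - β * ϑ (i - 1)) • (Estar i * A * Estar (i - 1) * A * Estar i)
      + ((q - q⁻¹) * (q ^ (2 : ℤ) - q ^ (-2 : ℤ))) •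
          (Estar i * A * Estar i * A * Estar i)
      + (2 * ϑ i - β * ϑ (i + 1)) • (Estar i * A * Estar (i + 1) * A * Estar i)
      - ((q - q⁻¹) * (q ^ (2 : ℤ) - q ^ (-2 : ℤ)) * (q + q⁻¹ + ϑ i)) •
          (Estar i * A * Estar i)
      + ((q ^ (2 : ℤ) - q ^ (-2 : ℤ)) ^ 2 * ϑ i) • Estar i = 0 := by
  subst hβ
  intro i hi
  have hz2 : (q : ℂ) ^ (2:ℤ) = q ^ 2 := by norm_cast
  have hzm2 : (q : ℂ) ^ (-2:ℤ) = (q^2)⁻¹ := by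
    rw [show (-2:ℤ) = -(2:ℤ) by norm_num, _root_.zpow_neg]; norm_cast
  have h1q : 1 + q^2 ≠ 0 := by intro h0; exact hq2 (by linear_combination h0)
  have hα : q + q⁻¹ ≠ 0 := by
    have e : q + q⁻¹ = (1 + q^2)/q := by field_simp; ring
    rw [e]; exact div_ne_zero h1q hq
  have hcval : ∀ x : ℂ, (q+q⁻¹) * (1 + x/(q+q⁻¹)) = (q+q⁻¹) + x := fun x => by
    rw [mul_add, mul_one, mul_div_cancel₀ x hα]
  -- convert β and zpow in the goal
  simp only [hz2, hzm2, mul_assoc]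
  -- eigenvalue relations
  have hEA : ∀ r ∈ Finset.Icc (0:ℤ) D, E r * A = ϑ r • E r := by
    intro r hr
    rw [hA, Finset.mul_sum]
    rw [Finset.sum_eq_single r (fun j hj hjr => by
      rw [mul_smul_comm, hEmul r hr j hj, if_neg (fun h => hjr h.symm), smul_zero])
      (fun hr' => absurd hr hr')]
    rw [mul_smul_comm, hEmul r hr r hr, if_pos rfl]
  have hAE : ∀ s ∈ Finset.Icc (0:ℤ) D, A * E s = ϑ s • E s := by
    intro s hs
    rw [hA, Finset.sum_mul]
    rw [Finset.sum_eq_single s (fun j hj hjs => by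
      rw [smul_mul_assoc, hEmul j hj s hs, if_neg hjs, smul_zero])
      (fun hs' => absurd hs hs')]
    rw [smul_mul_assoc, hEmul s hs s hs, if_pos rfl]
  have hsB : ∀ r ∈ Finset.Icc (0:ℤ) D, Estar r * B = ϑ r • Estar r := by
    intro r hr
    rw [hB, Finset.mul_sum]
    rw [Finset.sum_eq_single r (fun j hj hjr => by
      rw [mul_smul_comm, hEsmul r hr j hj, if_neg (fun h => hjr h.symm), smul_zero])
      (fun hr' => absurd hr hr')]
    rw [mul_smul_comm, hEsmul r hr r hr, if_pos rfl]
  have hBs : ∀ s ∈ Finset.Icc (0:ℤ) D, B * Estar s = ϑ s • Estar s := by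
    intro s hs
    rw [hB, Finset.sum_mul]
    rw [Finset.sum_eq_single s (fun j hj hjs => by
      rw [smul_mul_assoc, hEsmul j hj s hs, if_neg hjs, smul_zero])
      (fun hs' => absurd hs hs')]
    rw [smul_mul_assoc, hEsmul s hs s hs, if_pos rfl]
  have hEAX : ∀ r ∈ Finset.Icc (0:ℤ) D, ∀ M : Matrix X X ℂ,
      E r * (A * M) = ϑ r • (E r * M) := by
    intro r hr M; rw [← mul_assoc, hEA r hr, smul_mul_assoc]
  -- the rescaled Z
  obtain ⟨W, hWdef⟩ : ∃ W' : Matrix X X ℂ, W' = (q+q⁻¹) • Z := ⟨_, rfl⟩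
  have hWE : ∀ r ∈ Finset.Icc (0:ℤ) D,
      E r * W = ((q+q⁻¹) + ϑ r) • (E r * (B * E r)) := by
    intro r hr
    rw [hWdef, mul_smul_comm, (hZE r hr).2, smul_smul, hcval, mul_assoc]
  have hWEl : ∀ r ∈ Finset.Icc (0:ℤ) D,
      W * E r = ((q+q⁻¹) + ϑ r) • (E r * (B * E r)) := by
    intro r hr
    rw [hWdef, smul_mul_assoc, (hZE r hr).1, smul_smul, hcval, mul_assoc]
  have hfW : Estar i * W = ((q+q⁻¹) + ϑ i) • (Estar i * (A * Estar i)) := by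
    rw [hWdef, mul_smul_comm, (hZEs i hi).2, smul_smul, hcval, mul_assoc]
  have hWf : W * Estar i = ((q+q⁻¹) + ϑ i) • (Estar i * (A * Estar i)) := by
    rw [hWdef, smul_mul_assoc, (hZEs i hi).1, smul_smul, hcval, mul_assoc]
  -- Z diagonal in the E basis
  have hEW : ∀ r ∈ Finset.Icc (0:ℤ) D, ∀ s ∈ Finset.Icc (0:ℤ) D,
      E r * (W * E s) = if r = s then ((q+q⁻¹) + ϑ r) • (E r * (B * E r)) else 0 := by
    intro r hr s hs
    rw [← mul_assoc, hWE r hr, smul_mul_assoc, mul_assoc, mul_assoc, hEmul r hr s hs]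
    by_cases h : r = s
    · rw [if_pos h, if_pos h]
    · rw [if_neg h, if_neg h, Matrix.mul_zero, Matrix.mul_zero, smul_zero]
  -- the eigenvalue curve identity
  have sc1 : ∀ r : ℤ, ϑ r * ϑ r - (q^2+(q^2)⁻¹)*(ϑ r * ϑ (r+1)) + ϑ (r+1) * ϑ (r+1)
      + (q^2-(q^2)⁻¹)^2 = 0 := by
    intro r
    have hu : a * q ^ (2*r - D) ≠ 0 := mul_ne_zero ha (zpow_ne_zero _ hq)
    have h2q : (q:ℂ)^2 ≠ 0 := pow_ne_zero _ hq
    have einv : a⁻¹ * q ^ (D - 2*r) = (a * q ^ (2*r - D))⁻¹ := by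
      rw [mul_inv, show D - 2*r = -(2*r - D) by ring, _root_.zpow_neg]
    have h1 : ϑ r = a * q ^ (2*r - D) + (a * q ^ (2*r - D))⁻¹ := by rw [hϑ r, einv]
    have h2 : ϑ (r+1) = (a * q ^ (2*r - D)) * q^2 + (a * q ^ (2*r - D))⁻¹ * (q^2)⁻¹ := by
      rw [hϑ (r+1), show 2*(r+1) - D = (2*r-D)+2 by ring,
        show D - 2*(r+1) = (D-2*r)+(-2) by ring,
        zpow_add₀ hq, zpow_add₀ hq, ← mul_assoc, ← mul_assoc, einv, hz2, hzm2]
    rw [h1, h2]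
    have huv : (a * q ^ (2*r - D)) * (a * q ^ (2*r - D))⁻¹ = 1 := mul_inv_cancel₀ hu
    have hwx : (q:ℂ)^2 * ((q:ℂ)^2)⁻¹ = 1 := mul_inv_cancel₀ h2q
    set u := a * q ^ (2*r - D) with hu'
    set v := u⁻¹ with hv'
    set w := (q:ℂ)^2 with hw'
    set x := w⁻¹ with hx'
    linear_combination (-(u^2+v^2+2))*hwx + (-(w^2+x^2-2))*huv
  -- the master identity
  have master : A*A*B - (q^2+(q^2)⁻¹) • (A*B*A) + B*(A*A) + ((q^2-(q^2)⁻¹)^2) • B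
      - (q-q⁻¹)^2 • ((q+q⁻¹) • W - A*W) = 0 := by
    have expand : ∀ M : Matrix X X ℂ,
        M = ∑ r ∈ Finset.Icc (0:ℤ) D, ∑ s ∈ Finset.Icc (0:ℤ) D, E r * M * E s := by
      intro M
      calc M = 1 * M * 1 := by rw [one_mul, mul_one]
      _ = (∑ r ∈ Finset.Icc (0:ℤ) D, E r) * M * (∑ s ∈ Finset.Icc (0:ℤ) D, E s) := by
          rw [hEsum]
      _ = ∑ r ∈ Finset.Icc (0:ℤ) D, ∑ s ∈ Finset.Icc (0:ℤ) D, E r * M * E s := by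
          rw [Finset.sum_mul, Finset.sum_mul]
          exact Finset.sum_congr rfl fun r _ => Finset.mul_sum _ _ _
    rw [expand (A*A*B - (q^2+(q^2)⁻¹) • (A*B*A) + B*(A*A) + ((q^2-(q^2)⁻¹)^2) • B
      - (q-q⁻¹)^2 • ((q+q⁻¹) • W - A*W))]
    apply Finset.sum_eq_zero
    intro r hr
    apply Finset.sum_eq_zero
    intro s hs
    simp only [Matrix.mul_sub, Matrix.sub_mul, Matrix.mul_add, Matrix.add_mul,
      smul_mul_assoc, mul_smul_comm, mul_assoc]
    simp only [hAE s hs, mul_smul_comm]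
    simp only [hEAX r hr, mul_smul_comm, smul_smul]
    simp only [hEW r hr s hs]
    by_cases h : r = s
    · subst h
      simp only [eq_self_iff_true, if_true]
      match_scalars
      field_simp
      ring
    · simp only [if_neg h, smul_zero, sub_zero]
      have h3 : s = r + 1 ∨ r = s + 1 ∨ 1 < |r - s| := by
        rcases abs_cases (r - s) with ⟨e1, e2⟩ | ⟨e1, e2⟩ <;> omega
      rcases h3 with h3 | h3 | h3
      · subst h3
        match_scalars
        linear_combination sc1 r
      · subst h3
        match_scalars
        linear_combination sc1 s
      · have h0 : E r * (B * E s) = 0 := by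
          have := htriE r hr s hs h3; rwa [mul_assoc] at this
        simp only [h0, smul_zero]
        abel
  -- assembling the goal
  have hss : Estar i * Estar i = Estar i := by rw [hEsmul i hi i hi, if_pos rfl]
  have Lsum : ∀ w : ℤ → ℂ,
      ∑ j ∈ Finset.Icc (0:ℤ) D, w j • (Estar i * (A * (Estar j * (A * Estar i))))
      = w (i-1) • (Estar i * (A * (Estar (i-1) * (A * Estar i))))
      + w i • (Estar i * (A * (Estar i * (A * Estar i))))
      + w (i+1) • (Estar i * (A * (Estar (i+1) * (A * Estar i)))) := by
    intro w
    have hvan : ∀ j ∈ Finset.Icc (0:ℤ) D, j ∉ Finset.Icc (i-1) (i+1) →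
        w j • (Estar i * (A * (Estar j * (A * Estar i)))) = 0 := by
      intro j hj hj'
      have habs : 1 < |i - j| := by
        simp only [Finset.mem_Icc, not_and_or, not_le] at hj'
        rcases abs_cases (i - j) with ⟨e1, e2⟩ | ⟨e1, e2⟩ <;> omega
      have h0 : Estar i * A * Estar j = 0 := htriEs i hi j hj habs
      have e : Estar i * (A * (Estar j * (A * Estar i)))
          = (Estar i * A * Estar j) * (A * Estar i) := by simp only [mul_assoc]
      rw [e, h0, Matrix.zero_mul, smul_zero]
    have e1 : ∑ j ∈ Finset.Icc (0:ℤ) D, w j • (Estar i * (A * (Estar j * (A * Estar i))))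
        = ∑ j ∈ Finset.Icc (0:ℤ) D ∩ Finset.Icc (i-1) (i+1),
            w j • (Estar i * (A * (Estar j * (A * Estar i)))) := by
      refine (Finset.sum_subset Finset.inter_subset_left ?_).symm
      intro x hx hx'
      refine hvan x hx ?_
      intro hmem
      exact hx' (Finset.mem_inter.mpr ⟨hx, hmem⟩)
    have e2 : ∑ j ∈ Finset.Icc (0:ℤ) D ∩ Finset.Icc (i-1) (i+1),
          w j • (Estar i * (A * (Estar j * (A * Estar i))))
        = ∑ j ∈ Finset.Icc (i-1) (i+1),
            w j • (Estar i * (A * (Estar j * (A * Estar i)))) := by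
      refine Finset.sum_subset Finset.inter_subset_right ?_
      intro x hx hx'
      have hxD : x ∉ Finset.Icc (0:ℤ) D := by
        intro hmem
        exact hx' (Finset.mem_inter.mpr ⟨hmem, hx⟩)
      have hcase : x = -1 ∨ x = D + 1 := by
        simp only [Finset.mem_Icc, not_and_or, not_le] at hx hxD hi
        omega
      rcases hcase with rfl | rfl
      · rw [hEneg]; simp
      · rw [hEtop]; simp
    rw [e1, e2]
    have hIcc : Finset.Icc (i-1) (i+1) = {i-1, i, i+1} := by
      ext x
      simp only [Finset.mem_Icc, Finset.mem_insert, Finset.mem_singleton]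
      omega
    rw [hIcc]
    rw [Finset.sum_insert (by simp only [Finset.mem_insert, Finset.mem_singleton]; omega),
      Finset.sum_insert (by simp only [Finset.mem_singleton]; omega),
      Finset.sum_singleton, add_assoc]
  have L1 : Estar i * (A * (A * Estar i))
      = Estar i * (A * (Estar (i-1) * (A * Estar i)))
      + Estar i * (A * (Estar i * (A * Estar i)))
      + Estar i * (A * (Estar (i+1) * (A * Estar i))) := by
    have ins : Estar i * (A * (A * Estar i))
        = Estar i * (A * ((∑ j ∈ Finset.Icc (0:ℤ) D, Estar j) * (A * Estar i))) := by
      rw [hEssum, one_mul]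
    rw [ins]
    simp only [Finset.sum_mul, Finset.mul_sum]
    have := Lsum (fun _ => (1:ℂ))
    simp only [one_smul] at this
    rw [this]
  have L2 : Estar i * (A * (B * (A * Estar i)))
      = ϑ (i-1) • (Estar i * (A * (Estar (i-1) * (A * Estar i))))
      + ϑ i • (Estar i * (A * (Estar i * (A * Estar i))))
      + ϑ (i+1) • (Estar i * (A * (Estar (i+1) * (A * Estar i)))) := by
    rw [hB]
    simp only [Finset.sum_mul, Finset.mul_sum, smul_mul_assoc, mul_smul_comm]
    exact Lsum ϑ
  have P3 : Estar i * (B * (A * (A * Estar i)))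
      = ϑ i • (Estar i * (A * (A * Estar i))) := by
    rw [← mul_assoc, hsB i hi, smul_mul_assoc]
  have P5 : Estar i * (W * Estar i) = ((q+q⁻¹) + ϑ i) • (Estar i * (A * Estar i)) := by
    rw [← mul_assoc, hfW, smul_mul_assoc, mul_assoc, mul_assoc, hss]
  have P6 : Estar i * (A * (W * Estar i))
      = ((q+q⁻¹) + ϑ i) • (Estar i * (A * (Estar i * (A * Estar i)))) := by
    rw [hWf]
    simp only [mul_smul_comm]
  have H : Estar i * (A*A*B - (q^2+(q^2)⁻¹) • (A*B*A) + B*(A*A) + ((q^2-(q^2)⁻¹)^2) • B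
      - (q-q⁻¹)^2 • ((q+q⁻¹) • W - A*W)) * Estar i = 0 := by
    rw [master, Matrix.mul_zero, Matrix.zero_mul]
  simp only [Matrix.mul_sub, Matrix.sub_mul, Matrix.mul_add, Matrix.add_mul,
    smul_mul_assoc, mul_smul_comm, mul_assoc] at H
  simp only [hBs i hi, mul_smul_comm, smul_smul] at H
  simp only [P3, P5, P6, hss, mul_smul_comm, smul_smul] at H
  simp only [L1, L2] at H
  rw [← H]
  match_scalars <;> (field_simp; try ring)
end

section
/- Fix 1 ≤ i ≤ D and assume the matrix identity E*_{i−1}·A·E*_{i−1}·A·E*_i·(1 + ϑ_{i−1}/(q+q^{−1})) = E*_{i−1}·A·E*_i·A·E*_i·(1 + ϑ_i/(q+q^{−1})) + ε·((ϑ_{i−1} − ϑ_i)/(q+q^{−1}))·E*_{i−1}·A·E*_i. Let y, z ∈ X with ∂(x,y) = i−1, ∂(x,z) = i, and y adjacent to z, and let a₁ ∈ ℂ equal the number of common neighbors of y and z. Set z_i = |{w ∈ X : ∂(x,w) = i−1, w adjacent to y, w adjacent to z}|. If 2(q+q^{−1}) + ϑ_{i−1} + ϑ_i ≠ 0, then z_i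 = (a₁·(q + q^{−1} + ϑ_i) + ε·(ϑ_{i−1} − ϑ_i)) / (2(q+q^{−1}) + ϑ_{i−1} + ϑ_i). -/
open Matrix Finset

lemma entry5 {X : Type*} [Fintype X] [DecidableEq X] (d e f : X → ℂ)
    (M N : Matrix X X ℂ) (y z : X) :
    (Matrix.diagonal d * M * Matrix.diagonal e * N * Matrix.diagonal f) y z
      = d y * (∑ w, M y w * e w * N w z) * f z := by
  rw [Matrix.mul_diagonal, Matrix.mul_apply]
  simp only [Matrix.mul_diagonal, Matrix.diagonal_mul]
  simp only [Finset.mul_sum, Finset.sum_mul]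
  exact Finset.sum_congr rfl fun w _ => by ring

lemma entry3 {X : Type*} [Fintype X] [DecidableEq X] (d f : X → ℂ)
    (M : Matrix X X ℂ) (y z : X) :
    (Matrix.diagonal d * M * Matrix.diagonal f) y z = d y * M y z * f z := by
  simp only [Matrix.mul_diagonal, Matrix.diagonal_mul]

lemma sum_ite_card {X : Type*} [Fintype X] [DecidableEq X]
    (G : SimpleGraph X) [DecidableRel G.Adj] (x y z : X) (j : ℕ) :
    (∑ w, (if G.Adj y w then (1:ℂ) else 0) * (if G.dist x w = j then (1:ℂ) else 0)
        * (if G.Adj w z then (1:ℂ) else 0))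
      = ((Finset.univ.filter fun w => G.Adj y w ∧ G.dist x w = j ∧ G.Adj w z).card : ℂ) := by
  rw [Finset.card_filter, Nat.cast_sum]
  refine Finset.sum_congr rfl fun w _ => ?_
  by_cases h1 : G.Adj y w <;> by_cases h2 : G.dist x w = j <;> by_cases h3 : G.Adj w z <;>
    simp [h1, h2, h3]

theorem zi_formula {X : Type*} [Fintype X] [DecidableEq X]
    (G : SimpleGraph X) [DecidableRel G.Adj] (hconn : G.Connected)
    (x : X) (D : ℕ) (hD : 3 ≤ D)
    (q a : ℂ) (hq : q ≠ 0) (ha : a ≠ 0) (hq1 : q ^ 2 ≠ 1) (hq2 : q ^ 2 ≠ -1)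
    (ϑ : ℤ → ℂ)
    (hϑ : ∀ k : ℤ, ϑ k = a * q ^ (2 * k - (D : ℤ)) + a⁻¹ * q ^ ((D : ℤ) - 2 * k))
    (ε : ℂ)
    (A : Matrix X X ℂ) (hAdef : A = G.adjMatrix ℂ)
    (Estar : ℕ → Matrix X X ℂ)
    (hEstar : ∀ j : ℕ, Estar j =
      Matrix.diagonal (fun y => if G.dist x y = j then (1 : ℂ) else 0))
    (i : ℕ) (hi1 : 1 ≤ i) (hiD : i ≤ D)
    (hident :
      (1 + ϑ ((i : ℤ) - 1) / (q + q⁻¹)) •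
          (Estar (i - 1) * A * Estar (i - 1) * A * Estar i)
        = (1 + ϑ (i : ℤ) / (q + q⁻¹)) •
            (Estar (i - 1) * A * Estar i * A * Estar i)
          + (ε * ((ϑ ((i : ℤ) - 1) - ϑ (i : ℤ)) / (q + q⁻¹))) •
              (Estar (i - 1) * A * Estar i))
    (y z : X) (hy : G.dist x y = i - 1) (hz : G.dist x z = i) (hyz : G.Adj y z)
    (a₁ : ℂ)
    (ha₁ : a₁ = ((Finset.univ.filter fun w => G.Adj y w ∧ G.Adj z w).card : ℂ))
    (zi : ℕ)
    (hzi : zi = (Finset.univ.filter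
      fun w => G.dist x w = i - 1 ∧ G.Adj w y ∧ G.Adj w z).card)
    (hden : 2 * (q + q⁻¹) + ϑ ((i : ℤ) - 1) + ϑ (i : ℤ) ≠ 0) :
    (zi : ℂ) = (a₁ * (q + q⁻¹ + ϑ (i : ℤ)) + ε * (ϑ ((i : ℤ) - 1) - ϑ (i : ℤ)))
      / (2 * (q + q⁻¹) + ϑ ((i : ℤ) - 1) + ϑ (i : ℤ)) := by
  classical
  have hs : q + q⁻¹ ≠ 0 := by
    intro h
    apply hq2
    field_simp at h
    linear_combination h
  -- cardinal setup
  set N1 := (Finset.univ.filter fun w => G.Adj y w ∧ G.dist x w = i - 1 ∧ G.Adj w z).card with hN1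
  set N2 := (Finset.univ.filter fun w => G.Adj y w ∧ G.dist x w = i ∧ G.Adj w z).card with hN2
  -- zi = N1
  have hziN1 : zi = N1 := by
    rw [hzi, hN1]
    congr 1
    apply Finset.filter_congr
    intro w _
    constructor
    · rintro ⟨h1, h2, h3⟩; exact ⟨h2.symm, h1, h3⟩
    · rintro ⟨h1, h2, h3⟩; exact ⟨h2, h1.symm, h3⟩
  -- range of distances of common neighbors
  have hrange : ∀ w : X, G.Adj y w → G.Adj w z →
      (G.dist x w = i - 1 ∨ G.dist x w = i) := by
    intro w h1 h2
    have e1 : G.dist y w = 1 := SimpleGraph.dist_eq_one_iff_adj.2 h1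
    have e2 : G.dist w z = 1 := SimpleGraph.dist_eq_one_iff_adj.2 h2
    have d1 : G.dist x w ≤ G.dist x y + G.dist y w := hconn.dist_triangle
    have d2 : G.dist x z ≤ G.dist x w + G.dist w z := hconn.dist_triangle
    rw [hy, e1] at d1
    rw [hz, e2] at d2
    omega
  -- a₁ = N1 + N2
  have ha₁' : a₁ = (N1 : ℂ) + (N2 : ℂ) := by
    have hsplit := Finset.card_filter_add_card_filter_not
      (s := Finset.univ.filter fun w => G.Adj y w ∧ G.Adj z w)
      (p := fun w => G.dist x w = i - 1)
    rw [Finset.filter_filter, Finset.filter_filter] at hsplit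
    have hc1 : (Finset.univ.filter fun w => (G.Adj y w ∧ G.Adj z w) ∧ G.dist x w = i - 1)
        = Finset.univ.filter fun w => G.Adj y w ∧ G.dist x w = i - 1 ∧ G.Adj w z := by
      apply Finset.filter_congr
      intro w _
      constructor
      · rintro ⟨⟨h1, h2⟩, h3⟩; exact ⟨h1, h3, h2.symm⟩
      · rintro ⟨h1, h2, h3⟩; exact ⟨⟨h1, h3.symm⟩, h2⟩
    have hc2 : (Finset.univ.filter fun w => (G.Adj y w ∧ G.Adj z w) ∧ ¬ G.dist x w = i - 1)
        = Finset.univ.filter fun w => G.Adj y w ∧ G.dist x w = i ∧ G.Adj w z := by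
      apply Finset.filter_congr
      intro w _
      constructor
      · rintro ⟨⟨h1, h2⟩, h3⟩
        refine ⟨h1, ?_, h2.symm⟩
        rcases hrange w h1 h2.symm with h | h
        · exact absurd h h3
        · exact h
      · rintro ⟨h1, h2, h3⟩
        exact ⟨⟨h1, h3.symm⟩, by omega⟩
    rw [hc1, hc2, ← hN1, ← hN2] at hsplit
    rw [ha₁, ← hsplit]
    push_cast
    ring
  -- extract entry (y, z) of the identity
  have key := congrArg (fun M : Matrix X X ℂ => M y z) hident
  simp only [hEstar, hAdef, Matrix.smul_apply, Matrix.add_apply, entry5, entry3,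
    SimpleGraph.adjMatrix_apply, sum_ite_card G x y z, hy, hz, if_pos hyz, if_true,
    mul_one, one_mul, smul_eq_mul] at key
  rw [← hN1, ← hN2] at key
  -- finish with algebra
  have hq21 : q * q + 1 ≠ 0 := by
    intro h
    apply hq2
    linear_combination h
  rw [hziN1, ha₁', eq_div_iff hden]
  have hq22 : q ^ 2 + 1 ≠ 0 := by
    intro h
    apply hq2
    linear_combination h
  field_simp [hq21, hq22] at key ⊢
  linear_combination key
end

section
/- Fix 2 ≤ i ≤ D and assume the matrix identity E*_{i−1}·A·E*_{i−1}·A·E*_i·(1 + ϑ_{i−1}/(q+q^{−1})) = E*_{i−1}·A·E*_i·A·E*_i·(1 + ϑ_i/(q+q^{−1})) + ε·((ϑ_{i−1} − ϑ_i)/(q+q^{−1}))·E*_{i−1}·A·E*_i. Let y, z ∈ X with ∂(x,y) = i−1, ∂(x,z) = i, and ∂(y,z) = 2. Set n₁ = |{w ∈ X : ∂(x,w) = i−1, w adjacent to y, w adjacent to z}| and n₂ = |{w ∈ X : ∂(x,w) = i, w adjacent to y, w adjacent to z}|. If 2(q+q^{−1}) + ϑ_{i−1} + ϑ_i ≠ 0,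 then n₁ = (n₁+n₂)·(q + q^{−1} + ϑ_i)/(2(q+q^{−1}) + ϑ_{i−1} + ϑ_i) and n₂ = (n₁+n₂)·(q + q^{−1} + ϑ_{i−1})/(2(q+q^{−1}) + ϑ_{i−1} + ϑ_i). -/
open Matrix Finset

theorem distance_two_counts {X : Type*} [Fintype X] [DecidableEq X]
    (G : SimpleGraph X) [DecidableRel G.Adj] (hconn : G.Connected)
    (x : X) (D : ℕ) (hD : 3 ≤ D)
    (q a : ℂ) (hq : q ≠ 0) (ha : a ≠ 0) (hq1 : q ^ 2 ≠ 1) (hq2 : q ^ 2 ≠ -1)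
    (ϑ : ℤ → ℂ)
    (hϑ : ∀ k : ℤ, ϑ k = a * q ^ (2 * k - (D : ℤ)) + a⁻¹ * q ^ ((D : ℤ) - 2 * k))
    (ε : ℂ)
    (A : Matrix X X ℂ) (hAdef : A = G.adjMatrix ℂ)
    (Estar : ℕ → Matrix X X ℂ)
    (hEstar : ∀ j : ℕ, Estar j =
      Matrix.diagonal (fun y => if G.dist x y = j then (1 : ℂ) else 0))
    (i : ℕ) (hi1 : 2 ≤ i) (hiD : i ≤ D)
    (hident :
      (1 + ϑ ((i : ℤ) - 1) / (q + q⁻¹)) •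
          (Estar (i - 1) * A * Estar (i - 1) * A * Estar i)
        = (1 + ϑ (i : ℤ) / (q + q⁻¹)) •
            (Estar (i - 1) * A * Estar i * A * Estar i)
          + (ε * ((ϑ ((i : ℤ) - 1) - ϑ (i : ℤ)) / (q + q⁻¹))) •
              (Estar (i - 1) * A * Estar i))
    (y z : X) (hy : G.dist x y = i - 1) (hz : G.dist x z = i) (hyz : G.dist y z = 2)
    (n₁ n₂ : ℕ)
    (hn₁ : n₁ = (Finset.univ.filter
      fun w => G.dist x w = i - 1 ∧ G.Adj w y ∧ G.Adj w z).card)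
    (hn₂ : n₂ = (Finset.univ.filter
      fun w => G.dist x w = i ∧ G.Adj w y ∧ G.Adj w z).card)
    (hden : 2 * (q + q⁻¹) + ϑ ((i : ℤ) - 1) + ϑ (i : ℤ) ≠ 0) :
    (n₁ : ℂ) = ((n₁ : ℂ) + (n₂ : ℂ)) * (q + q⁻¹ + ϑ (i : ℤ))
        / (2 * (q + q⁻¹) + ϑ ((i : ℤ) - 1) + ϑ (i : ℤ)) ∧
    (n₂ : ℂ) = ((n₁ : ℂ) + (n₂ : ℂ)) * (q + q⁻¹ + ϑ ((i : ℤ) - 1))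
        / (2 * (q + q⁻¹) + ϑ ((i : ℤ) - 1) + ϑ (i : ℤ)) := by
  -- q + q⁻¹ ≠ 0
  have hs : q + q⁻¹ ≠ 0 := by
    intro h
    apply hq2
    field_simp at h
    linear_combination h
  -- y and z are not adjacent
  have hA0 : ¬ G.Adj y z := by
    intro h
    have := SimpleGraph.dist_eq_one_iff_adj.mpr h
    omega
  -- entries of the three matrix products at (y, z)
  have key : ∀ (j : ℕ) (m : ℕ),
      (Estar (i - 1) * A * Estar j * A * Estar i) y z
        = ((Finset.univ.filter
            fun w => G.dist x w = j ∧ G.Adj w y ∧ G.Adj w z).card : ℂ) := by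
    intro j m
    simp only [hEstar, hAdef]
    rw [Matrix.mul_diagonal, Matrix.mul_apply]
    simp only [Matrix.mul_diagonal, Matrix.diagonal_mul, SimpleGraph.adjMatrix_apply,
      hy, hz, if_pos rfl, if_true, one_mul, mul_one]
    rw [← Finset.sum_boole]
    refine Finset.sum_congr rfl fun w _ => ?_
    by_cases h1 : G.dist x w = j <;> by_cases h2 : G.Adj y w <;>
      by_cases h3 : G.Adj w z <;>
        simp [h1, h2, h3, G.adj_comm w y]
  have h1 : (Estar (i - 1) * A * Estar (i - 1) * A * Estar i) y z = (n₁ : ℂ) := by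
    rw [key (i-1) 0, hn₁]
  have h2 : (Estar (i - 1) * A * Estar i * A * Estar i) y z = (n₂ : ℂ) := by
    rw [key i 0, hn₂]
  have h3 : (Estar (i - 1) * A * Estar i) y z = 0 := by
    simp only [hEstar, hAdef]
    rw [Matrix.mul_diagonal, Matrix.diagonal_mul]
    simp [hA0]
  -- evaluate the identity at (y, z)
  have hent := congrArg (fun M : Matrix X X ℂ => M y z) hident
  simp only [Matrix.smul_apply, Matrix.add_apply, h1, h2, h3, smul_eq_mul,
    mul_zero, add_zero] at hent
  -- linear relation
  set c := ϑ ((i : ℤ) - 1)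
  set d := ϑ (i : ℤ)
  have hqq : q * q + 1 ≠ 0 := by
    intro h
    apply hq2
    linear_combination h
  have hrel : (q + q⁻¹ + c) * n₁ = (q + q⁻¹ + d) * n₂ := by
    field_simp [hqq] at hent ⊢
    have hq2' : q ^ 2 + 1 ≠ 0 := by intro h; apply hq2; linear_combination h
    field_simp [hq2'] at hent
    linear_combination hent
  constructor
  · rw [eq_div_iff hden]
    linear_combination hrel
  · rw [eq_div_iff hden]
    linear_combination -hrel
end
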